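/- arXiv:2012.09926 — 5 statements merged into one kernel-verified Lean document; each statement's English description precedes it below -/
import Mathlib

section
/- The set of partitions of a positive integer n under the dominance order forms a lattice: any two partitions have a least upper bound and a greatest lower bound. -/
def IsPartition (n : ℕ) (a : ℕ → ℕ) : Prop :=
  (∀ i j, i ≤ j → a j ≤ a i) ∧ (∑ i ∈ Finset.range n, a i = n) ∧ (∀ i, n ≤ i → a i = 0)

def Dom (a b : ℕ → ℕ) : Prop :=
  ∀ j, ∑ i ∈ Finset.range j, a i ≤ ∑ i ∈ Finset.range j, b i

def IsSupOf (n : ℕ) (a b c : ℕ → ℕ) : Prop :=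
  IsPartition n c ∧ Dom a c ∧ Dom b c ∧
    ∀ d, IsPartition n d → Dom a d → Dom b d → Dom c d

def IsInfOf (n : ℕ) (a b c : ℕ → ℕ) : Prop :=
  IsPartition n c ∧ Dom c a ∧ Dom c b ∧
    ∀ d, IsPartition n d → Dom d a → Dom d b → Dom d c

namespace DomLatticeAux

open Finset

def psum (a : ℕ → ℕ) (j : ℕ) : ℕ := ∑ i ∈ Finset.range j, a i

lemma psum_mono (a : ℕ → ℕ) : Monotone (psum a) := fun i j h =>
  Finset.sum_le_sum_of_subset (Finset.range_subset_range.2 h)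

lemma part_le (n : ℕ) {a : ℕ → ℕ} (ha : IsPartition n a) (j : ℕ) : a j ≤ n := by
  rcases lt_or_ge j n with h | h
  · calc a j ≤ ∑ i ∈ Finset.range n, a i :=
        Finset.single_le_sum (fun i _ => Nat.zero_le _) (Finset.mem_range.2 h)
      _ = n := ha.2.1
  · rw [ha.2.2 j h]; exact Nat.zero_le _

lemma psum_of_le (n : ℕ) {a : ℕ → ℕ} (ha : IsPartition n a) {j : ℕ} (h : n ≤ j) :
    psum a j = n := by
  have h1 : psum a n = psum a j := by
    unfold psum
    apply Finset.sum_subset (Finset.range_subset_range.2 h)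
    intro x _ hxn
    exact ha.2.2 x (by simpa using hxn)
  rw [← h1]; exact ha.2.1

def infFn (a b : ℕ → ℕ) : ℕ → ℕ :=
  fun i => min (psum a (i+1)) (psum b (i+1)) - min (psum a i) (psum b i)

lemma inf_isInfOf (n : ℕ) {a b : ℕ → ℕ} (ha : IsPartition n a) (hb : IsPartition n b) :
    IsInfOf n a b (infFn a b) := by
  set g : ℕ → ℕ := fun j => min (psum a j) (psum b j) with hg
  have gmono : Monotone g := fun i j h => min_le_min (psum_mono a h) (psum_mono b h)
  have g0 : g 0 = 0 := by simp [hg, psum]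
  have csum : ∀ j, psum (infFn a b) j = g j := by
    intro j
    unfold psum infFn
    rw [show (fun i => min (psum a (i+1)) (psum b (i+1)) - min (psum a i) (psum b i))
        = fun i => g (i+1) - g i from rfl]
    rw [Finset.sum_range_tsub gmono, g0, Nat.sub_zero]
  have hsucc : ∀ j, psum a (j+1) = psum a j + a j := fun j => Finset.sum_range_succ a j
  have hsuccb : ∀ j, psum b (j+1) = psum b j + b j := fun j => Finset.sum_range_succ b j
  have hstep : ∀ k, g (k+2) + g k ≤ g (k+1) + g (k+1) := by
    intro k
    rcases min_cases (psum a (k+1)) (psum b (k+1)) with ⟨h1, _⟩ | ⟨h1, _⟩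
    · have e1 : g (k+2) ≤ psum a (k+2) := min_le_left _ _
      have e2 : g k ≤ psum a k := min_le_left _ _
      have e3 : psum a (k+2) = psum a (k+1) + a (k+1) := hsucc (k+1)
      have e4 := hsucc k
      have e5 : a (k+1) ≤ a k := ha.1 k (k+1) (by omega)
      have e6 : g (k+1) = psum a (k+1) := h1
      omega
    · have e1 : g (k+2) ≤ psum b (k+2) := min_le_right _ _
      have e2 : g k ≤ psum b k := min_le_right _ _
      have e3 : psum b (k+2) = psum b (k+1) + b (k+1) := hsuccb (k+1)
      have e4 := hsuccb k
      have e5 : b (k+1) ≤ b k := hb.1 k (k+1) (by omega)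
      have e6 : g (k+1) = psum b (k+1) := h1
      omega
  have canti : Antitone (infFn a b) := by
    apply antitone_nat_of_succ_le
    intro k
    show g (k+2) - g (k+1) ≤ g (k+1) - g k
    have := hstep k
    have m1 : g k ≤ g (k+1) := gmono (by omega)
    have m2 : g (k+1) ≤ g (k+2) := gmono (by omega)
    omega
  have gn : ∀ j, n ≤ j → g j = n := by
    intro j hj; simp [hg, psum_of_le n ha hj, psum_of_le n hb hj]
  refine ⟨⟨fun i j h => canti h, ?_, ?_⟩, ?_, ?_, ?_⟩
  · have := csum n
    unfold psum at this
    rw [this, gn n le_rfl]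
  · intro i hi
    show g (i+1) - g i = 0
    rw [gn i hi, gn (i+1) (by omega)]
    omega
  · intro j
    have := csum j
    unfold psum at this
    rw [this]
    exact min_le_left _ _
  · intro j
    have := csum j
    unfold psum at this
    rw [this]
    exact min_le_right _ _
  · intro d _ hda hdb j
    have := csum j
    unfold psum at this
    rw [this]
    exact le_min (hda j) (hdb j)

def conj (n : ℕ) (a : ℕ → ℕ) : ℕ → ℕ :=
  fun i => ((Finset.range n).filter (fun j => i < a j)).card

lemma card_filter_range_lt (k m : ℕ) :
    ((Finset.range k).filter (fun i => i < m)).card = min m k := by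
  have h : (Finset.range k).filter (fun i => i < m) = Finset.range (min m k) := by
    ext x; simp only [Finset.mem_filter, Finset.mem_range, lt_min_iff]; omega
  rw [h, Finset.card_range]

lemma conj_psum (n : ℕ) (a : ℕ → ℕ) (k : ℕ) :
    psum (conj n a) k = ∑ j ∈ Finset.range n, min (a j) k := by
  unfold psum conj
  simp only [Finset.card_filter]
  rw [Finset.sum_comm]
  refine Finset.sum_congr rfl fun j _ => ?_
  rw [← Finset.card_filter, card_filter_range_lt]

lemma lower_eq_range (S : Finset ℕ) (h : ∀ x ∈ S, ∀ y, y ≤ x → y ∈ S) :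
    S = Finset.range S.card := by
  rcases S.eq_empty_or_nonempty with rfl | hS
  · simp
  · have hM := S.max'_mem hS
    have h1 : S = Finset.range (S.max' hS + 1) := by
      ext x
      simp only [Finset.mem_range, Nat.lt_succ_iff]
      exact ⟨fun hx => S.le_max' x hx, fun hx => h _ hM x hx⟩
    rw [h1, Finset.card_range]

lemma tsub_sum_le (n : ℕ) {a b : ℕ → ℕ} (ha : IsPartition n a) (_hb : IsPartition n b)
    (hd : Dom a b) (k : ℕ) :
    ∑ j ∈ Finset.range n, (a j - k) ≤ ∑ j ∈ Finset.range n, (b j - k) := by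
  set S := (Finset.range n).filter (fun j => k < a j) with hS
  have hlow : ∀ x ∈ S, ∀ y, y ≤ x → y ∈ S := by
    intro x hx y hy
    simp only [hS, Finset.mem_filter, Finset.mem_range] at hx ⊢
    have := ha.1 y x hy
    omega
  have hSr : S = Finset.range S.card := lower_eq_range S hlow
  set m := S.card with hm
  have hmn : m ≤ n := by
    have := Finset.card_filter_le (Finset.range n) (fun j => k < a j)
    simpa [hm, hS] using this
  have h2 : ∀ j ∈ Finset.range m, k ≤ a j := by
    intro j hj
    have : j ∈ S := by rw [hSr]; exact hj
    simp only [hS, Finset.mem_filter] at this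
    omega
  have h1 : ∑ j ∈ Finset.range n, (a j - k) = ∑ j ∈ Finset.range m, (a j - k) := by
    symm
    apply Finset.sum_subset (Finset.range_subset_range.2 hmn)
    intro x hx hxm
    have hxS : x ∉ S := by rw [hSr]; exact hxm
    simp only [hS, Finset.mem_filter, Finset.mem_range] at hxS
    have hxn := Finset.mem_range.1 hx
    omega
  have h3 : ∑ j ∈ Finset.range m, (a j - k) = psum a m - k * m := by
    rw [Finset.sum_tsub_distrib _ h2]
    congr 1
    rw [Finset.sum_const, Finset.card_range, smul_eq_mul, Nat.mul_comm]
  have hkm : k * m ≤ psum a m := by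
    have := Finset.sum_le_sum h2
    rw [Finset.sum_const, Finset.card_range, smul_eq_mul, Nat.mul_comm] at this
    exact this
  have h4 : psum b m - k * m ≤ ∑ j ∈ Finset.range m, (b j - k) := by
    have e : ∀ j ∈ Finset.range m, b j ≤ (b j - k) + k := fun j _ => by omega
    have := Finset.sum_le_sum e
    rw [Finset.sum_add_distrib, Finset.sum_const, Finset.card_range, smul_eq_mul,
      Nat.mul_comm] at this
    unfold psum
    omega
  have h5 : ∑ j ∈ Finset.range m, (b j - k) ≤ ∑ j ∈ Finset.range n, (b j - k) :=
    Finset.sum_le_sum_of_subset (Finset.range_subset_range.2 hmn)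
  have hdm : psum a m ≤ psum b m := hd m
  omega

lemma conj_dom (n : ℕ) {a b : ℕ → ℕ} (ha : IsPartition n a) (hb : IsPartition n b)
    (hd : Dom a b) : Dom (conj n b) (conj n a) := by
  have key : ∀ (c : ℕ → ℕ), IsPartition n c → ∀ k,
      ∑ j ∈ Finset.range n, min (c j) k = n - ∑ j ∈ Finset.range n, (c j - k) := by
    intro c hc k
    have e : ∀ j ∈ Finset.range n, min (c j) k = c j - (c j - k) := fun j _ => by omega
    rw [Finset.sum_congr rfl e, Finset.sum_tsub_distrib _ (fun j _ => Nat.sub_le _ _), hc.2.1]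
  intro k
  show psum (conj n b) k ≤ psum (conj n a) k
  rw [conj_psum, conj_psum, key a ha k, key b hb k]
  exact Nat.sub_le_sub_left (tsub_sum_le n ha hb hd k) n

lemma conj_part (n : ℕ) {a : ℕ → ℕ} (ha : IsPartition n a) : IsPartition n (conj n a) := by
  refine ⟨?_, ?_, ?_⟩
  · intro i j h
    apply Finset.card_le_card
    intro x hx
    simp only [Finset.mem_filter] at hx ⊢
    exact ⟨hx.1, lt_of_le_of_lt h hx.2⟩
  · show psum (conj n a) n = n
    rw [conj_psum]
    have e : ∀ j ∈ Finset.range n, min (a j) n = a j :=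
      fun j _ => min_eq_left (part_le n ha j)
    rw [Finset.sum_congr rfl e, ha.2.1]
  · intro i hi
    show (Finset.filter _ _).card = 0
    rw [Finset.card_eq_zero, Finset.filter_eq_empty_iff]
    intro x _
    exact not_lt.2 ((part_le n ha x).trans hi)

lemma conj_conj (n : ℕ) {a : ℕ → ℕ} (ha : IsPartition n a) : conj n (conj n a) = a := by
  funext j
  rcases lt_or_ge j n with hj | hj
  · have key : ∀ i, j < conj n a i ↔ i < a j := by
      intro i
      constructor
      · intro h
        by_contra hcon
        push_neg at hcon
        have hsub : (Finset.range n).filter (fun l => i < a l) ⊆ Finset.range j := by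
          intro l hl
          simp only [Finset.mem_filter, Finset.mem_range] at hl ⊢
          by_contra hlj
          push_neg at hlj
          have := ha.1 j l hlj
          omega
        have hcard := Finset.card_le_card hsub
        rw [Finset.card_range] at hcard
        have : conj n a i ≤ j := hcard
        omega
      · intro h
        have hsub : Finset.range (j+1) ⊆ (Finset.range n).filter (fun l => i < a l) := by
          intro l hl
          simp only [Finset.mem_range] at hl
          simp only [Finset.mem_filter, Finset.mem_range]
          have hal := ha.1 l j (by omega)
          omega
        have hcard := Finset.card_le_card hsub
        rw [Finset.card_range] at hcard
        have : j + 1 ≤ conj n a i := hcard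
        omega
    show ((Finset.range n).filter (fun i => j < conj n a i)).card = a j
    have e : (Finset.range n).filter (fun i => j < conj n a i)
        = (Finset.range n).filter (fun i => i < a j) := by
      ext x
      simp only [Finset.mem_filter, key x]
    rw [e, card_filter_range_lt]
    exact min_eq_left (part_le n ha j)
  · have h1 : conj n (conj n a) j = 0 := (conj_part n (conj_part n ha)).2.2 j hj
    rw [h1, ha.2.2 j hj]

end DomLatticeAux

open DomLatticeAux in
/-- The partitions of a positive integer  under dominance form a lattice:
any two partitions have a least upper bound and a greatest lower bound. -/
theorem stmt1 (n : ℕ) (hn : 0 < n) :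
    ∀ a b, IsPartition n a → IsPartition n b →
      (∃ c, IsSupOf n a b c) ∧ (∃ c, IsInfOf n a b c) := by
  intro a b ha hb
  constructor
  · have hca := conj_part n ha
    have hcb := conj_part n hb
    obtain ⟨hcp, hc1, hc2, hcglb⟩ := inf_isInfOf n hca hcb
    refine ⟨conj n (infFn (conj n a) (conj n b)), conj_part n hcp, ?_, ?_, ?_⟩
    · have h := conj_dom n hcp hca hc1
      rwa [conj_conj n ha] at h
    · have h := conj_dom n hcp hcb hc2
      rwa [conj_conj n hb] at h
    · intro d hd hda hdb
      have h1 := conj_dom n ha hd hda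
      have h2 := conj_dom n hb hd hdb
      have h3 := hcglb (conj n d) (conj_part n hd) h1 h2
      have h4 := conj_dom n (conj_part n hd) hcp h3
      rwa [conj_conj n hd] at h4
  · exact ⟨infFn a b, inf_isInfOf n ha hb⟩
end

section
/- The image of the dominance lattice of partitions of n under the map α ↦ α↓₁ = (a₁+1,a₂,…,aₙ,0) is a sublattice of the dominance lattice of partitions of n+1 (closed under joins and meets). -/
def downAt (i : ℕ) (a : ℕ → ℕ) : ℕ → ℕ := fun j => if j = i then a j + 1 else a j

/- ### Auxiliary lemmas -/

lemma downAt_sum (a : ℕ → ℕ) (j : ℕ) :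
    ∑ i ∈ Finset.range j, downAt 0 a i = (∑ i ∈ Finset.range j, a i) + min j 1 := by
  induction j with
  | zero => simp
  | succ j ih =>
    rw [Finset.sum_range_succ, Finset.sum_range_succ, ih]
    unfold downAt
    rcases Nat.eq_zero_or_pos j with h | h
    · subst h; simp
    · have hj : j ≠ 0 := by omega
      simp only [hj, if_false]
      omega

lemma sum_range_le_mul {a : ℕ → ℕ} (ha : ∀ i j, i ≤ j → a j ≤ a i) (j : ℕ) :
    ∑ i ∈ Finset.range j, a i ≤ j * a 0 := by
  calc ∑ i ∈ Finset.range j, a i ≤ ∑ _i ∈ Finset.range j, a 0 :=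
        Finset.sum_le_sum fun i _ => ha 0 i (Nat.zero_le i)
  _ = j * a 0 := by simp [mul_comm]

lemma part_sum_tail {n : ℕ} {a : ℕ → ℕ} (h : IsPartition n a) {j : ℕ} (hj : n ≤ j) :
    ∑ i ∈ Finset.range j, a i = n := by
  rw [← h.2.1]
  exact (Finset.sum_subset (Finset.range_subset_range.2 hj)
    (fun x hx hxn => h.2.2 x (by simp only [Finset.mem_range] at hx hxn; omega))).symm

lemma build_sum (F : ℕ → ℕ) (h0 : F 0 = 0) (hmono : ∀ j, F j ≤ F (j + 1)) (j : ℕ) :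
    ∑ i ∈ Finset.range j, (F (i + 1) - F i) = F j := by
  induction j with
  | zero => simpa using h0.symm
  | succ j ih =>
    rw [Finset.sum_range_succ, ih]
    have := hmono j
    omega

lemma build_anti (F : ℕ → ℕ) (hmono : ∀ j, F j ≤ F (j + 1))
    (hconc : ∀ j, F j + F (j + 2) ≤ 2 * F (j + 1)) :
    ∀ i j, i ≤ j → F (j + 1) - F j ≤ F (i + 1) - F i := by
  intro i j hij
  induction j with
  | zero =>
    have : i = 0 := Nat.le_zero.mp hij
    subst this; exact le_rfl
  | succ j ih =>
    rcases Nat.lt_or_ge i (j + 1) with h | h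
    · have h1 := ih (Nat.lt_succ_iff.mp h)
      have h2 : F j + F (j + 1 + 1) ≤ 2 * F (j + 1) := hconc j
      have h3 := hmono j
      have h4 := hmono (j + 1)
      omega
    · have : i = j + 1 := le_antisymm hij h
      subst this; exact le_rfl

lemma downAt_partition {n : ℕ} {d : ℕ → ℕ} (h : IsPartition n d) :
    IsPartition (n + 1) (downAt 0 d) := by
  obtain ⟨hanti, hsum, hz⟩ := h
  refine ⟨?_, ?_, ?_⟩
  · intro i j hij
    unfold downAt
    rcases Nat.eq_zero_or_pos i with hi | hi
    · subst hi
      rcases Nat.eq_zero_or_pos j with hj | hj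
      · subst hj; simp
      · have hj' : j ≠ 0 := by omega
        rw [if_neg hj', if_pos rfl]
        have := hanti 0 j (Nat.zero_le j)
        omega
    · have hi' : i ≠ 0 := by omega
      have hj' : j ≠ 0 := by omega
      rw [if_neg hi', if_neg hj']
      exact hanti i j hij
  · rw [downAt_sum]
    have h1 : ∑ i ∈ Finset.range (n + 1), d i = n := part_sum_tail ⟨hanti, hsum, hz⟩ (by omega)
    omega
  · intro i hi
    have hi' : i ≠ 0 := by omega
    unfold downAt
    rw [if_neg hi']
    exact hz i (by omega)

lemma part_head_pos {n : ℕ} {a : ℕ → ℕ} (hn : 0 < n) (h : IsPartition n a) : 1 ≤ a 0 := by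
  by_contra hcon
  have hz : ∀ i ∈ Finset.range n, a i = 0 := fun i _ =>
    Nat.le_zero.mp (le_trans (h.1 0 i (Nat.zero_le i)) (by omega))
  have := h.2.1
  rw [Finset.sum_eq_zero hz] at this
  omega

/-- Key lemma: the head of the sup drops strictly. -/
lemma sup_c1 (n : ℕ) (hn : 0 < n) (a b c : ℕ → ℕ)
    (ha : IsPartition n a) (hb : IsPartition n b)
    (hc : IsSupOf (n + 1) (downAt 0 a) (downAt 0 b) c) : c 1 + 1 ≤ c 0 := by
  obtain ⟨⟨hca, hcs, hcz⟩, hdac, hdbc, hmin⟩ := hc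
  by_contra hcon
  have hc10 : c 1 = c 0 := le_antisymm (hca 0 1 (by omega)) (by omega)
  set m := c 0 with hm
  have ha0 : 1 ≤ a 0 := part_head_pos hn ha
  have hma : a 0 + 1 ≤ m := by
    have h1 := hdac 1
    rw [downAt_sum] at h1
    simpa [Finset.sum_range_one] using h1
  have hmb : b 0 + 1 ≤ m := by
    have h1 := hdbc 1
    rw [downAt_sum] at h1
    simpa [Finset.sum_range_one] using h1
  have hm2 : 2 ≤ m := by omega
  set F : ℕ → ℕ := fun j => min (∑ i ∈ Finset.range j, c i) (m * j + 1 - j) with hF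
  have hF0 : F 0 = 0 := by simp [hF]
  have hFmono : ∀ j, F j ≤ F (j + 1) := by
    intro j
    have h1 := Finset.sum_range_succ c j
    have h2 : m * (j + 1) = m * j + m := by ring
    have h6 : 2 * j ≤ m * j := Nat.mul_le_mul hm2 le_rfl
    simp only [hF]
    generalize m * (j + 1) = Y at *
    generalize m * j = X at *
    omega
  have hFconc : ∀ j, F j + F (j + 2) ≤ 2 * F (j + 1) := by
    intro j
    have h1 := Finset.sum_range_succ c j
    have h2 : ∑ i ∈ Finset.range (j + 2), c i = ∑ i ∈ Finset.range (j + 1), c i + c (j + 1) :=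
      Finset.sum_range_succ c (j + 1)
    have h3 : c (j + 1) ≤ c j := hca j (j + 1) (by omega)
    have h4 : m * (j + 1) = m * j + m := by ring
    have h5 : m * (j + 2) = m * j + 2 * m := by ring
    have h6 : 2 * j ≤ m * j := Nat.mul_le_mul hm2 le_rfl
    simp only [hF]
    generalize m * (j + 2) = Z at *
    generalize m * (j + 1) = Y at *
    generalize m * j = X at *
    omega
  set e : ℕ → ℕ := fun k => F (k + 1) - F k with he
  have heS : ∀ j, ∑ i ∈ Finset.range j, e i = F j := build_sum F hF0 hFmono
  have hepart : IsPartition (n + 1) e := by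
    refine ⟨fun i j hij => build_anti F hFmono hFconc i j hij, ?_, ?_⟩
    · rw [heS]
      have h1 : 2 * (n + 1) ≤ m * (n + 1) := Nat.mul_le_mul hm2 le_rfl
      simp only [hF]
      generalize m * (n + 1) = X at *
      omega
    · intro i hi
      have h1 : ∑ k ∈ Finset.range i, c k = n + 1 :=
        part_sum_tail ⟨hca, hcs, hcz⟩ (by omega)
      have h2 : ∑ k ∈ Finset.range (i + 1), c k = n + 1 :=
        part_sum_tail ⟨hca, hcs, hcz⟩ (by omega)
      have h3 : 2 * i ≤ m * i := Nat.mul_le_mul hm2 le_rfl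
      have h4 : 2 * (i + 1) ≤ m * (i + 1) := Nat.mul_le_mul hm2 le_rfl
      simp only [he, hF]
      generalize m * (i + 1) = Y at *
      generalize m * i = X at *
      omega
  have hdom : ∀ x : ℕ → ℕ, (∀ i j, i ≤ j → x j ≤ x i) →
      x 0 + 1 ≤ m → Dom (downAt 0 x) c → Dom (downAt 0 x) e := by
    intro x hxa hxm hxc j
    rw [downAt_sum, heS]
    rcases Nat.eq_zero_or_pos j with hj | hj
    · subst hj; simp [hF]
    · have h1 := hxc j
      rw [downAt_sum] at h1
      have hkey : (∑ i ∈ Finset.range j, x i) + j ≤ m * j := by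
        calc (∑ i ∈ Finset.range j, x i) + j ≤ j * x 0 + j := by
              have := sum_range_le_mul hxa j; omega
          _ = j * (x 0 + 1) := by ring
          _ ≤ j * m := Nat.mul_le_mul le_rfl hxm
          _ = m * j := by ring
      simp only [hF]
      generalize m * j = X at *
      omega
  have hde : Dom c e :=
    hmin e hepart (hdom a ha.1 hma hdac) (hdom b hb.1 hmb hdbc)
  have h2 := hde 2
  rw [heS] at h2
  have h3 : ∑ i ∈ Finset.range 2, c i = c 0 + c 1 := by
    simp [Finset.sum_range_succ]
  simp only [hF] at h2
  have h4 : m * 2 = 2 * m := by ring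
  omega

/-- The image of the dominance lattice of partitions of  under
 is a sublattice of the dominance lattice of partitions of . -/
theorem stmt5 (n : ℕ) (hn : 0 < n) :
    ∀ a b, IsPartition n a → IsPartition n b →
      (∀ c, IsSupOf (n + 1) (downAt 0 a) (downAt 0 b) c →
        ∃ d, IsPartition n d ∧ c = downAt 0 d) ∧
      (∀ c, IsInfOf (n + 1) (downAt 0 a) (downAt 0 b) c →
        ∃ d, IsPartition n d ∧ c = downAt 0 d) := by
  intro a b ha hb
  constructor
  · -- sup case
    intro c hc
    have h1 := sup_c1 n hn a b c ha hb hc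
    obtain ⟨⟨hca, hcs, hcz⟩, hdac, hdbc, hmin⟩ := hc
    have hcn : c n = 0 := by
      have h2 := hdac n
      rw [downAt_sum, ha.2.1] at h2
      have h3 : ∑ i ∈ Finset.range (n + 1), c i = ∑ i ∈ Finset.range n, c i + c n :=
        Finset.sum_range_succ c n
      have h4 : min n 1 = 1 := by omega
      omega
    have hSn : ∑ i ∈ Finset.range n, c i = n + 1 := by
      have h3 : ∑ i ∈ Finset.range (n + 1), c i = ∑ i ∈ Finset.range n, c i + c n :=
        Finset.sum_range_succ c n
      omega
    set d : ℕ → ℕ := fun j => if j = 0 then c 0 - 1 else c j with hdd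
    have hd0 : d 0 = c 0 - 1 := by simp [hdd]
    have hdj : ∀ j, j ≠ 0 → d j = c j := by
      intro j hj
      simp only [hdd]
      rw [if_neg hj]
    refine ⟨d, ⟨?_, ?_, ?_⟩, ?_⟩
    · intro i j hij
      rcases Nat.eq_zero_or_pos i with hi | hi
      · subst hi
        rcases Nat.eq_zero_or_pos j with hj | hj
        · subst hj; exact le_rfl
        · have hj' : j ≠ 0 := by omega
          rw [hdj j hj', hd0]
          have := hca 1 j hj
          omega
      · have hi' : i ≠ 0 := by omega
        have hj' : j ≠ 0 := by omega
        rw [hdj i hi', hdj j hj']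
        exact hca i j hij
    · obtain ⟨n', rfl⟩ : ∃ n', n = n' + 1 := ⟨n - 1, by omega⟩
      rw [Finset.sum_range_succ']
      have hcc : ∑ k ∈ Finset.range n', d (k + 1) = ∑ k ∈ Finset.range n', c (k + 1) :=
        Finset.sum_congr rfl fun k _ => hdj (k + 1) (Nat.succ_ne_zero k)
      rw [hcc, hd0]
      rw [Finset.sum_range_succ'] at hSn
      omega
    · intro i hi
      have hi' : i ≠ 0 := by omega
      rw [hdj i hi']
      rcases Nat.eq_or_lt_of_le hi with h | h
      · rw [← h]; exact hcn
      · exact hcz i (by omega)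
    · funext j
      unfold downAt
      rcases Nat.eq_zero_or_pos j with hj | hj
      · subst hj
        rw [if_pos rfl, hd0]
        omega
      · have hj' : j ≠ 0 := by omega
        rw [if_neg hj', hdj j hj']
  · -- inf case
    intro c hc
    obtain ⟨hcp, hdca, hdcb, hmax⟩ := hc
    set G : ℕ → ℕ := fun j => min (∑ i ∈ Finset.range j, a i) (∑ i ∈ Finset.range j, b i)
      with hG
    have hG0 : G 0 = 0 := by simp [hG]
    have hGmono : ∀ j, G j ≤ G (j + 1) := by
      intro j
      have h1 := Finset.sum_range_succ a j
      have h2 := Finset.sum_range_succ b j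
      simp only [hG]
      omega
    have hGconc : ∀ j, G j + G (j + 2) ≤ 2 * G (j + 1) := by
      intro j
      have h1 := Finset.sum_range_succ a j
      have h2 : ∑ i ∈ Finset.range (j + 2), a i = ∑ i ∈ Finset.range (j + 1), a i + a (j + 1) :=
        Finset.sum_range_succ a (j + 1)
      have h3 := Finset.sum_range_succ b j
      have h4 : ∑ i ∈ Finset.range (j + 2), b i = ∑ i ∈ Finset.range (j + 1), b i + b (j + 1) :=
        Finset.sum_range_succ b (j + 1)
      have h5 : a (j + 1) ≤ a j := ha.1 j (j + 1) (by omega)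
      have h6 : b (j + 1) ≤ b j := hb.1 j (j + 1) (by omega)
      simp only [hG]
      omega
    set g : ℕ → ℕ := fun k => G (k + 1) - G k with hg
    have hgS : ∀ j, ∑ i ∈ Finset.range j, g i = G j := build_sum G hG0 hGmono
    have hgpart : IsPartition n g := by
      refine ⟨fun i j hij => build_anti G hGmono hGconc i j hij, ?_, ?_⟩
      · rw [hgS]
        simp only [hG, ha.2.1, hb.2.1, min_self]
      · intro i hi
        have h1 : ∑ k ∈ Finset.range i, a k = n := part_sum_tail ha hi
        have h2 : ∑ k ∈ Finset.range (i + 1), a k = n := part_sum_tail ha (by omega)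
        have h3 : ∑ k ∈ Finset.range i, b k = n := part_sum_tail hb hi
        have h4 : ∑ k ∈ Finset.range (i + 1), b k = n := part_sum_tail hb (by omega)
        simp only [hg, hG]
        omega
    have hd1 : Dom (downAt 0 g) (downAt 0 a) := by
      intro j
      rw [downAt_sum, downAt_sum, hgS]
      simp only [hG]
      omega
    have hd2 : Dom (downAt 0 g) (downAt 0 b) := by
      intro j
      rw [downAt_sum, downAt_sum, hgS]
      simp only [hG]
      omega
    have hgc : Dom (downAt 0 g) c := hmax (downAt 0 g) (downAt_partition hgpart) hd1 hd2
    have hcg : Dom c (downAt 0 g) := by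
      intro j
      rw [downAt_sum, hgS]
      have h1 := hdca j
      have h2 := hdcb j
      rw [downAt_sum] at h1 h2
      simp only [hG]
      omega
    have hkey : ∀ j, ∑ i ∈ Finset.range j, c i = ∑ i ∈ Finset.range j, downAt 0 g i :=
      fun j => le_antisymm (hcg j) (hgc j)
    refine ⟨g, hgpart, ?_⟩
    funext i
    have e1 := hkey i
    have e2 := hkey (i + 1)
    rw [Finset.sum_range_succ, Finset.sum_range_succ] at e2
    omega
end

section
/- For every n ≥ 7, the dominance lattice of partitions of n contains a sublattice isomorphic to the pentagon N₅, and hence is neither modular nor distributive. -/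
def pl (a b c d : ℕ) : ℕ → ℕ := fun i =>
  if i = 0 then a else if i = 1 then b else if i = 2 then c else if i = 3 then d else 0

lemma prefix_pl (a b c d j : ℕ) :
    ∑ i ∈ Finset.range j, pl a b c d i =
      if j = 0 then 0 else if j = 1 then a else if j = 2 then a + b
      else if j = 3 then a + b + c else a + b + c + d := by
  match j with
  | 0 => simp
  | 1 => simp [Finset.sum_range_succ, pl]
  | 2 => simp [Finset.sum_range_succ, pl]
  | 3 => simp [Finset.sum_range_succ, pl]
  | (j+4) =>
    have h : ∑ i ∈ Finset.range (j+4), pl a b c d i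
        = ∑ i ∈ Finset.range 4, pl a b c d i := by
      refine (Finset.sum_subset (Finset.range_subset_range.2 (by omega)) ?_).symm
      intro x _ hx
      simp only [Finset.mem_range, not_lt] at hx
      unfold pl; split_ifs <;> omega
    rw [h]
    simp [Finset.sum_range_succ, pl]

lemma pl_anti (a b c d : ℕ) (hab : b ≤ a) (hbc : c ≤ b) (hcd : d ≤ c) :
    ∀ i j, i ≤ j → pl a b c d j ≤ pl a b c d i := by
  have key : ∀ i, pl a b c d (i+1) ≤ pl a b c d i := by
    intro i
    match i with
    | 0 => simpa [pl] using hab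
    | 1 => simpa [pl] using hbc
    | 2 => simpa [pl] using hcd
    | 3 => simp [pl]
    | (k+4) => simp [pl]
  intro i j hij
  exact antitone_nat_of_succ_le key hij

lemma pl_partition (n a b c d : ℕ) (h4 : 4 ≤ n) (hab : b ≤ a) (hbc : c ≤ b) (hcd : d ≤ c)
    (hsum : a + b + c + d = n) :
    (∀ i j, i ≤ j → pl a b c d j ≤ pl a b c d i) ∧
      (∑ i ∈ Finset.range n, pl a b c d i = n) ∧ (∀ i, n ≤ i → pl a b c d i = 0) := by
  refine ⟨pl_anti a b c d hab hbc hcd, ?_, ?_⟩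
  · rw [prefix_pl]; split_ifs <;> omega
  · intro i hi; unfold pl; split_ifs <;> omega

lemma pl_dom {a1 b1 c1 d1 a2 b2 c2 d2 : ℕ} (h1 : a1 ≤ a2) (h2 : a1+b1 ≤ a2+b2)
    (h3 : a1+b1+c1 ≤ a2+b2+c2) (h4 : a1+b1+c1+d1 ≤ a2+b2+c2+d2) :
    ∀ j, ∑ i ∈ Finset.range j, pl a1 b1 c1 d1 i ≤ ∑ i ∈ Finset.range j, pl a2 b2 c2 d2 i := by
  intro j; rw [prefix_pl, prefix_pl]; split_ifs <;> omega

/-- For n ≥ 7 the dominance lattice of partitions of n contains a sublattice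
isomorphic to the pentagon N₅, hence is neither modular nor distributive. -/
theorem stmt6 (n : ℕ) (hn : 7 ≤ n) :
    (∃ z w u v o : ℕ → ℕ,
      IsPartition n z ∧ IsPartition n w ∧ IsPartition n u ∧ IsPartition n v ∧
        IsPartition n o ∧
      Dom z w ∧ z ≠ w ∧ Dom w u ∧ w ≠ u ∧ Dom u o ∧ u ≠ o ∧
      Dom z v ∧ z ≠ v ∧ Dom v o ∧ v ≠ o ∧
      ¬ Dom v u ∧ ¬ Dom u v ∧ ¬ Dom v w ∧ ¬ Dom w v ∧
      IsInfOf n u v z ∧ IsSupOf n u v o ∧ IsInfOf n w v z ∧ IsSupOf n w v o) ∧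
    -- non-modularity: the modular law fails
    (¬ ∀ x y m i s s' i', IsPartition n x → IsPartition n y → IsPartition n m →
        Dom x m → IsInfOf n y m i → IsSupOf n x i s → IsSupOf n x y s' →
        IsInfOf n s' m i' → s = i') ∧
    -- non-distributivity: the distributive law fails
    (¬ ∀ x y z s i i₁ i₂ s', IsPartition n x → IsPartition n y → IsPartition n z →
        IsSupOf n y z s → IsInfOf n x s i → IsInfOf n x y i₁ → IsInfOf n x z i₂ →
        IsSupOf n i₁ i₂ s' → i = s') := by

  -- The five partitions:  z=(n-4,2,1,1), w=(n-4,2,2), u=(n-4,3,1), v=(n-3,1,1,1), o=(n-3,2,1)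
  set Z := pl (n-4) 2 1 1 with hZdef
  set W := pl (n-4) 2 2 0 with hWdef
  set U := pl (n-4) 3 1 0 with hUdef
  set V := pl (n-3) 1 1 1 with hVdef
  set O := pl (n-3) 2 1 0 with hOdef
  have hZ : IsPartition n Z := pl_partition n _ _ _ _ (by omega) (by omega) (by omega) (by omega) (by omega)
  have hW : IsPartition n W := pl_partition n _ _ _ _ (by omega) (by omega) (by omega) (by omega) (by omega)
  have hU : IsPartition n U := pl_partition n _ _ _ _ (by omega) (by omega) (by omega) (by omega) (by omega)
  have hV : IsPartition n V := pl_partition n _ _ _ _ (by omega) (by omega) (by omega) (by omega) (by omega)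
  have hO : IsPartition n O := pl_partition n _ _ _ _ (by omega) (by omega) (by omega) (by omega) (by omega)
  have hZW : Dom Z W := pl_dom (by omega) (by omega) (by omega) (by omega)
  have hWU : Dom W U := pl_dom (by omega) (by omega) (by omega) (by omega)
  have hUO : Dom U O := pl_dom (by omega) (by omega) (by omega) (by omega)
  have hZV : Dom Z V := pl_dom (by omega) (by omega) (by omega) (by omega)
  have hVO : Dom V O := pl_dom (by omega) (by omega) (by omega) (by omega)
  have hZU : Dom Z U := pl_dom (by omega) (by omega) (by omega) (by omega)
  have hWO : Dom W O := pl_dom (by omega) (by omega) (by omega) (by omega)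
  have hneZW : Z ≠ W := by
    intro h; have := congrFun h 2; simp [hZdef, hWdef, pl] at this
  have hneWU : W ≠ U := by
    intro h; have := congrFun h 1; simp [hWdef, hUdef, pl] at this
  have hneUO : U ≠ O := by
    intro h; have := congrFun h 0; simp [hUdef, hOdef, pl] at this; omega
  have hneZV : Z ≠ V := by
    intro h; have := congrFun h 0; simp [hZdef, hVdef, pl] at this; omega
  have hneVO : V ≠ O := by
    intro h; have := congrFun h 1; simp [hVdef, hOdef, pl] at this
  have hnVU : ¬ Dom V U := by
    intro h; have := h 1
    rw [hVdef, hUdef, prefix_pl, prefix_pl] at this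
    simp at this; omega
  have hnUV : ¬ Dom U V := by
    intro h; have := h 2
    rw [hVdef, hUdef, prefix_pl, prefix_pl] at this
    simp at this; omega
  have hnVW : ¬ Dom V W := by
    intro h; have := h 1
    rw [hVdef, hWdef, prefix_pl, prefix_pl] at this
    simp at this; omega
  have hnWV : ¬ Dom W V := by
    intro h; have := h 3
    rw [hVdef, hWdef, prefix_pl, prefix_pl] at this
    simp at this; omega
  have hInfUVZ : IsInfOf n U V Z := by
    refine ⟨hZ, hZU, hZV, ?_⟩
    intro d _ h1 h2 j
    have a1 := h1 j; have a2 := h2 j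
    rw [hUdef, prefix_pl] at a1
    rw [hVdef, prefix_pl] at a2
    rw [hZdef, prefix_pl]
    split_ifs at a1 a2 ⊢ <;> omega
  have hSupUVO : IsSupOf n U V O := by
    refine ⟨hO, hUO, hVO, ?_⟩
    intro d _ h1 h2 j
    have a1 := h1 j; have a2 := h2 j
    rw [hUdef, prefix_pl] at a1
    rw [hVdef, prefix_pl] at a2
    rw [hOdef, prefix_pl]
    split_ifs at a1 a2 ⊢ <;> omega
  have hInfWVZ : IsInfOf n W V Z := by
    refine ⟨hZ, hZW, hZV, ?_⟩
    intro d _ h1 h2 j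
    have a1 := h1 j; have a2 := h2 j
    rw [hWdef, prefix_pl] at a1
    rw [hVdef, prefix_pl] at a2
    rw [hZdef, prefix_pl]
    split_ifs at a1 a2 ⊢ <;> omega
  have hSupWVO : IsSupOf n W V O := by
    refine ⟨hO, hWO, hVO, ?_⟩
    intro d hd h1 h2
    have e1 : ∑ i ∈ Finset.range 1, d i = d 0 := by simp
    have e2 : ∑ i ∈ Finset.range 2, d i = d 0 + d 1 := by
      simp [Finset.sum_range_succ]
    have e3 : ∑ i ∈ Finset.range 3, d i = d 0 + d 1 + d 2 := by
      simp [Finset.sum_range_succ]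
    have hp1 := h2 1
    have hp3 := h1 3
    rw [hVdef, prefix_pl, e1] at hp1
    rw [hWdef, prefix_pl, e3] at hp3
    simp at hp1 hp3
    have hle : d 0 + d 1 + d 2 ≤ n := by
      rw [← e3]
      calc ∑ i ∈ Finset.range 3, d i ≤ ∑ i ∈ Finset.range n, d i :=
            Finset.sum_le_sum_of_subset (Finset.range_subset_range.2 (by omega))
        _ = n := hd.2.1
    have hmono : d 2 ≤ d 1 := hd.1 1 2 (by omega)
    have key : n - 1 ≤ d 0 + d 1 := by omega
    intro j
    match j with
    | 0 => simp
    | 1 =>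
      rw [hOdef, prefix_pl, e1]; simp; omega
    | 2 =>
      rw [hOdef, prefix_pl, e2]; simp; omega
    | (j+3) =>
      have a1 := h1 (j+3)
      rw [hWdef, prefix_pl] at a1
      rw [hOdef, prefix_pl]
      split_ifs at a1 ⊢ <;> omega
  refine ⟨⟨Z, W, U, V, O, hZ, hW, hU, hV, hO, hZW, hneZW, hWU, hneWU, hUO, hneUO,
    hZV, hneZV, hVO, hneVO, hnVU, hnUV, hnVW, hnWV, hInfUVZ, hSupUVO, hInfWVZ, hSupWVO⟩, ?_, ?_⟩
  · intro H
    have hInfVUZ : IsInfOf n V U Z := ⟨hZ, hZV, hZU, fun d hd h1 h2 => hInfUVZ.2.2.2 d hd h2 h1⟩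
    have hSupWZW : IsSupOf n W Z W := ⟨hW, fun j => le_refl _, hZW, fun d _ h _ => h⟩
    have hInfOUU : IsInfOf n O U U := ⟨hU, hUO, fun j => le_refl _, fun d _ _ h => h⟩
    exact hneWU (H W V U Z W O U hW hV hU hWU hInfVUZ hSupWZW hSupWVO hInfOUU)
  · intro H
    have hInfUOU : IsInfOf n U O U := ⟨hU, fun j => le_refl _, hUO, fun d _ h _ => h⟩
    have hInfUWW : IsInfOf n U W W := ⟨hW, hWU, fun j => le_refl _, fun d _ _ h => h⟩
    have hSupWZW : IsSupOf n W Z W := ⟨hW, fun j => le_refl _, hZW, fun d _ h _ => h⟩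
    exact hneWU (H U W V O U W Z W hU hW hV hSupWVO hInfUOU hInfUWW hInfUVZ hSupWZW).symm
end

section
/- In the dominance lattice of partitions of n, the partition α covers β if and only if either (1) there is j with α_j = β_j + 1, α_{j+1} = β_{j+1} − 1 and α_i = β_i for all other i, or (2) there are j < k with α_j = β_j + 1, α_k = β_k − 1, β_j = β_k, and α_i = β_i for all other i. -/
/-- α covers β in the dominance order (β < α with nothing strictly between). -/
def CoversD (n : ℕ) (a b : ℕ → ℕ) : Prop :=
  Dom b a ∧ a ≠ b ∧
    ¬ ∃ c, IsPartition n c ∧ Dom b c ∧ b ≠ c ∧ Dom c a ∧ c ≠ a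

namespace Bry

def S (f : ℕ → ℕ) (m : ℕ) : ℕ := ∑ i ∈ Finset.range m, f i

lemma S_succ (f : ℕ → ℕ) (m : ℕ) : S f (m+1) = S f m + f m := Finset.sum_range_succ f m

lemma S_zero (f : ℕ → ℕ) : S f 0 = 0 := by simp [S]

lemma eq_of_S_eq {f g : ℕ → ℕ} (h : ∀ m, S f m = S g m) : f = g := by
  funext m
  have h1 := h (m+1)
  have h2 := h m
  rw [S_succ, S_succ] at h1
  omega

lemma S_eq_of_ge {n : ℕ} {f : ℕ → ℕ} (hf : IsPartition n f) : ∀ m, n ≤ m → S f m = n := by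
  intro m hm
  induction m with
  | zero =>
    have hn0 : n = 0 := by omega
    rw [S_zero, hn0]
  | succ m ih =>
    rcases Nat.lt_or_ge m n with h | h
    · have : m + 1 = n := by omega
      rw [this]; exact hf.2.1
    · rw [S_succ, hf.2.2 m h, ih h]; omega

def mv (b : ℕ → ℕ) (j k : ℕ) : ℕ → ℕ :=
  fun i => if i = j then b j + 1 else if i = k then b k - 1 else b i

lemma mv_j (b : ℕ → ℕ) (j k : ℕ) : mv b j k j = b j + 1 := by simp [mv]

lemma mv_k (b : ℕ → ℕ) {j k : ℕ} (h : j ≠ k) : mv b j k k = b k - 1 := by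
  simp [mv, h.symm]

lemma mv_o (b : ℕ → ℕ) {j k i : ℕ} (h1 : i ≠ j) (h2 : i ≠ k) : mv b j k i = b i := by
  simp [mv, h1, h2]

lemma mv_S (b : ℕ → ℕ) {j k : ℕ} (hjk : j < k) (hbk : 0 < b k) :
    ∀ m, S (mv b j k) m = S b m + (if j < m ∧ m ≤ k then 1 else 0) := by
  intro m
  induction m with
  | zero => simp [S_zero]
  | succ m ih =>
    rw [S_succ, S_succ, ih]
    rcases eq_or_ne m j with rfl | hmj
    · rw [mv_j]
      split_ifs <;> omega
    · rcases eq_or_ne m k with rfl | hmk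
      · rw [mv_k b hjk.ne]
        split_ifs <;> omega
      · rw [mv_o b hmj hmk]
        split_ifs <;> omega

lemma mv_partition {n : ℕ} {b : ℕ → ℕ} {j k : ℕ} (hb : IsPartition n b)
    (hjk : j < k) (hkn : k < n)
    (hj : ∀ i, i < j → b j < b i) (hk : b (k+1) < b k) :
    IsPartition n (mv b j k) := by
  obtain ⟨hmono, hsum, hzero⟩ := hb
  refine ⟨?_, ?_, ?_⟩
  · intro i₁ i₂ h12
    have hm12 := hmono i₁ i₂ h12
    rcases eq_or_ne i₂ j with h2j | h2j
    · rcases eq_or_ne i₁ j with h1j | h1j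
      · rw [h1j, h2j]
      · have h1j' : i₁ < j := by omega
        have h1k : i₁ ≠ k := by omega
        rw [h2j, mv_j, mv_o b h1j h1k]
        exact hj i₁ h1j'
    · rcases eq_or_ne i₂ k with h2k | h2k
      · rw [h2k, mv_k b hjk.ne]
        rcases eq_or_ne i₁ j with h1j | h1j
        · rw [h1j, mv_j]
          have := hmono j k hjk.le
          omega
        · rcases eq_or_ne i₁ k with h1k | h1k
          · rw [h1k, mv_k b hjk.ne]
          · rw [mv_o b h1j h1k]
            have := hmono i₁ k (by omega)
            omega
      · rw [mv_o b h2j h2k]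
        rcases eq_or_ne i₁ j with h1j | h1j
        · rw [h1j, mv_j]
          have := hmono j i₂ (by omega)
          omega
        · rcases eq_or_ne i₁ k with h1k | h1k
          · rw [h1k, mv_k b hjk.ne]
            have := hmono (k+1) i₂ (by omega)
            omega
          · rw [mv_o b h1j h1k]
            exact hmono _ _ h12
  · show S (mv b j k) n = n
    rw [mv_S b hjk (by omega) n, if_neg (by omega)]
    have : S b n = n := hsum
    omega
  · intro i hi
    rw [mv_o b (by omega : i ≠ j) (by omega : i ≠ k)]
    exact hzero i hi

lemma contra {n : ℕ} {a b : ℕ → ℕ} (hb : IsPartition n b)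
    (hdom : Dom b a)
    (hcov : ¬ ∃ c, IsPartition n c ∧ Dom b c ∧ b ≠ c ∧ Dom c a ∧ c ≠ a)
    {j r j' k' : ℕ} (hwin : ∀ m, j < m → m ≤ r → S b m < S a m)
    (hjj' : j ≤ j') (hj'k' : j' < k') (hk'r : k' ≤ r) (hrn : r < n)
    (hj' : ∀ i, i < j' → b j' < b i) (hk' : b (k'+1) < b k') :
    mv b j' k' = a := by
  by_contra hne
  apply hcov
  refine ⟨mv b j' k', mv_partition hb hj'k' (by omega) hj' hk', ?_, ?_, ?_, hne⟩
  · intro m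
    show S b m ≤ S (mv b j' k') m
    rw [mv_S b hj'k' (by omega) m]
    omega
  · intro h
    have := congrFun h j'
    rw [mv_j] at this
    omega
  · intro m
    show S (mv b j' k') m ≤ S a m
    rw [mv_S b hj'k' (by omega) m]
    split_ifs with h
    · have := hwin m (by omega) (by omega)
      omega
    · exact hdom m

lemma no_descent_const {b : ℕ → ℕ} {j : ℕ} : ∀ r, j ≤ r →
    (∀ m, j ≤ m → m < r → b m ≤ b (m+1)) → b j ≤ b r := by
  intro r
  induction r with
  | zero =>
    intro h _
    have hj0 : j = 0 := by omega
    subst hj0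
    exact le_rfl
  | succ r ih =>
    intro hjr h
    rcases Nat.lt_or_ge j (r+1) with h1 | h1
    · have e1 := ih (by omega) (fun m hm1 hm2 => h m hm1 (by omega))
      have e2 := h r (by omega) (by omega)
      omega
    · have hj1 : j = r + 1 := by omega
      subst hj1
      exact le_rfl


lemma backward {n : ℕ} {a b : ℕ → ℕ} (_ha : IsPartition n a) (hb : IsPartition n b)
    {j k : ℕ} (hjk : j < k) (hkn : k < n)
    (haj : a j = b j + 1) (hbk : b k = a k + 1)
    (hcase : k = j + 1 ∨ b j = b k)
    (hoth : ∀ i, i ≠ j → i ≠ k → a i = b i) :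
    CoversD n a b := by
  have hSa : ∀ m, S a m = S b m + (if j < m ∧ m ≤ k then 1 else 0) := by
    intro m
    induction m with
    | zero => simp [S_zero]
    | succ m ih =>
      rw [S_succ, S_succ, ih]
      rcases eq_or_ne m j with rfl | hmj
      · rw [haj]; split_ifs <;> omega
      · rcases eq_or_ne m k with rfl | hmk
        · split_ifs <;> omega
        · rw [hoth m hmj hmk]; split_ifs <;> omega
  refine ⟨?_, ?_, ?_⟩
  · intro m
    show S b m ≤ S a m
    have := hSa m
    split_ifs at this <;> omega
  · intro h
    have := congrFun h j
    omega
  · rintro ⟨c, hc, hbc, hbc', hca, hca'⟩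
    have hbcS : ∀ m, S b m ≤ S c m := hbc
    have hcaS : ∀ m, S c m ≤ S a m := hca
    have hP : ∀ m, S c m = S b m ∨ (S c m = S b m + 1 ∧ j < m ∧ m ≤ k) := by
      intro m
      have h1 := hbcS m
      have h2 := hcaS m
      have h3 := hSa m
      split_ifs at h3 with h4
      · rcases h4 with ⟨h5, h6⟩
        omega
      · left; omega
    have hPout : ∀ m, ¬(j < m ∧ m ≤ k) → S c m = S b m := by
      intro m hm
      rcases hP m with h | ⟨_, h1, h2⟩
      · exact h
      · exact absurd ⟨h1, h2⟩ hm
    -- if S c equals S b on window everywhere, then c = b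
    by_cases hall0 : ∀ m, j < m → m ≤ k → S c m = S b m
    · exact hbc' (eq_of_S_eq (fun m => by
        by_cases hm : j < m ∧ m ≤ k
        · exact (hall0 m hm.1 hm.2).symm
        · exact (hPout m hm).symm))
    by_cases hall1 : ∀ m, j < m → m ≤ k → S c m = S b m + 1
    -- if S c = S b + 1 on all the window, then c = a
    · refine hca' (eq_of_S_eq (fun m => ?_))
      have h3 := hSa m
      by_cases hm : j < m ∧ m ≤ k
      · rw [if_pos hm] at h3
        rw [hall1 m hm.1 hm.2, h3]
      · rw [if_neg hm] at h3
        rw [hPout m hm, h3]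
        omega
    push_neg at hall0
    push_neg at hall1
    obtain ⟨p0, hp0j, hp0k, hp0e⟩ := hall0
    obtain ⟨z, hzj, hzk, hze⟩ := hall1
    have hp0 : S c p0 = S b p0 + 1 := by
      rcases hP p0 with h | ⟨h, _, _⟩
      · exact absurd h hp0e
      · exact h
    have hz0 : S c z = S b z := by
      rcases hP z with h | ⟨h, _, _⟩
      · exact h
      · exact absurd h hze
    rcases hcase with rfl | hcase
    · -- k = j + 1 : window is a single point, contradiction
      have e1 : p0 = j + 1 := by omega
      have e2 : z = j + 1 := by omega
      rw [e1] at hp0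
      rw [e2] at hz0
      omega
    -- general case : b is constant on [j,k]
    have hbconst : ∀ m, j ≤ m → m ≤ k → b m = b j := by
      intro m h1 h2
      have e1 := hb.1 j m h1
      have e2 := hb.1 m k h2
      omega
    have hcmono := hc.1
    -- p : least index with S c p = S b p + 1
    have hexp : ∃ m, S c m = S b m + 1 := ⟨p0, hp0⟩
    obtain ⟨p, hp1, hpmin⟩ : ∃ p, S c p = S b p + 1 ∧ ∀ m, m < p → S c m = S b m := by
      refine ⟨Nat.find hexp, Nat.find_spec hexp, fun m hm => ?_⟩
      have := Nat.find_min hexp hm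
      rcases hP m with h | ⟨h, _, _⟩
      · exact h
      · exact absurd h this
    have hpj : j < p := by
      rcases hP p with h | ⟨_, h1, h2⟩
      · omega
      · exact h1
    have hpk : p ≤ k := by
      rcases hP p with h | ⟨_, h1, h2⟩
      · omega
      · exact h2
    -- q : greatest index ≤ k with S c q = S b q + 1
    obtain ⟨q, hq1, hqp, hqk, hqmax⟩ :
        ∃ q, S c q = S b q + 1 ∧ p ≤ q ∧ q ≤ k ∧ ∀ m, q < m → S c m = S b m := by
      refine ⟨Nat.findGreatest (fun m => S c m = S b m + 1) k,
        Nat.findGreatest_spec (P := fun m => S c m = S b m + 1) (m := p) hpk hp1,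
        Nat.le_findGreatest hpk hp1, Nat.findGreatest_le k, fun m hm => ?_⟩
      by_cases hmk : m ≤ k
      · have := Nat.findGreatest_is_greatest hm hmk
        rcases hP m with h | ⟨h, _, _⟩
        · exact h
        · exact absurd h this
      · exact hPout m (by omega)
    have hqj : j < q := by omega
    -- value equations from prefix sums
    have cval : ∀ m, c m + (S c m - S b m) = b m + (S c (m+1) - S b (m+1)) := by
      intro m
      have e1 := S_succ c m
      have e2 := S_succ b m
      have e3 := hbcS m
      have e4 := hbcS (m+1)
      omega
    rcases Nat.lt_or_ge z p with hzp | hzp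
    · -- z < p : rise strictly after j while c j = b j
      have hej : S c j = S b j := hPout j (by omega)
      have hej1 : S c (j+1) = S b (j+1) := hpmin (j+1) (by omega)
      have hcj : c j = b j := by have := cval j; omega
      have hep1 : S c (p-1) = S b (p-1) := hpmin (p-1) (by omega)
      have hcp1 : c (p-1) = b (p-1) + 1 := by
        have := cval (p-1)
        rw [show p - 1 + 1 = p from by omega] at this
        omega
      have hbp1 : b (p-1) = b j := hbconst (p-1) (by omega) (by omega)
      have := hcmono j (p-1) (by omega)
      omega
    rcases Nat.lt_or_ge q z with hqz | hqz
    · -- q < z : fall strictly before k while c k = b k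
      have hek : S c k = S b k := hqmax k (by omega)
      have hek1 : S c (k+1) = S b (k+1) := hPout (k+1) (by omega)
      have hck : c k = b k := by have := cval k; omega
      have heq1 : S c (q+1) = S b (q+1) := hqmax (q+1) (by omega)
      have hcq : c q + 1 = b q := by have := cval q; omega
      have hbq : b q = b j := hbconst q (by omega) (by omega)
      have hbk' : b k = b j := hbconst k (by omega) (by omega)
      have := hcmono q k (by omega)
      omega
    -- p ≤ z ≤ q, with S c z = S b z, so p < z < q
    have hpz : p < z := by
      rcases Nat.lt_or_ge p z with h | h
      · exact h
      · exfalso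
        have he : p = z := by omega
        rw [he] at hp1
        omega
    have hzq : z < q := by
      rcases Nat.lt_or_ge z q with h | h
      · exact h
      · exfalso
        have he : z = q := by omega
        rw [he] at hz0
        omega
    -- m2 : greatest index ≤ z with S c m2 = S b m2 + 1 (a fall), then a rise after z
    obtain ⟨m2, hm21, hm2p, hm2z, hm2max⟩ :
        ∃ m2, S c m2 = S b m2 + 1 ∧ p ≤ m2 ∧ m2 ≤ z ∧ ∀ m, m2 < m → m ≤ z → S c m = S b m := by
      refine ⟨Nat.findGreatest (fun m => S c m = S b m + 1) z,
        Nat.findGreatest_spec (P := fun m => S c m = S b m + 1) (m := p) (by omega) hp1,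
        Nat.le_findGreatest (by omega) hp1, Nat.findGreatest_le z, fun m hm hmz => ?_⟩
      have := Nat.findGreatest_is_greatest hm hmz
      rcases hP m with h | ⟨h, _, _⟩
      · exact h
      · exact absurd h this
    have hm2z' : m2 < z := by
      rcases Nat.lt_or_ge m2 z with h | h
      · exact h
      · exfalso
        have he : m2 = z := by omega
        rw [he] at hm21
        omega
    -- m1 : least index > z with S c m1 = S b m1 + 1 (so a rise at m1 - 1)
    have hexm1 : ∃ m, z < m ∧ S c m = S b m + 1 := ⟨q, hzq, hq1⟩
    obtain ⟨m1, ⟨hm1z, hm11⟩, hm1min, hm1q⟩ :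
        ∃ m1, (z < m1 ∧ S c m1 = S b m1 + 1) ∧ (∀ m, m < m1 → z < m → S c m = S b m) ∧ m1 ≤ q := by
      refine ⟨Nat.find hexm1, Nat.find_spec hexm1, fun m hm hzm => ?_,
        Nat.find_min' hexm1 ⟨hzq, hq1⟩⟩
      have := Nat.find_min hexm1 hm
      rcases hP m with h | ⟨h, _, _⟩
      · exact h
      · exact absurd ⟨hzm, h⟩ this
    -- fall at m2 : c m2 = b j - 1
    have hem2 : S c (m2+1) = S b (m2+1) := hm2max (m2+1) (by omega) (by omega)
    have hcm2 : c m2 + 1 = b m2 := by have := cval m2; omega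
    have hbm2 : b m2 = b j := hbconst m2 (by omega) (by omega)
    -- rise at m1 - 1 : c (m1-1) = b j + 1
    have hem1 : S c (m1-1) = S b (m1-1) := by
      rcases Nat.lt_or_ge z (m1-1) with h | h
      · exact hm1min (m1-1) (by omega) h
      · have : m1 - 1 = z := by omega
        rw [this]; exact hz0
    have hcm1 : c (m1-1) = b (m1-1) + 1 := by
      have := cval (m1-1)
      rw [show m1 - 1 + 1 = m1 from by omega] at this
      omega
    have hbm1 : b (m1-1) = b j := hbconst (m1-1) (by omega) (by omega)
    have := hcmono m2 (m1-1) (by omega)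
    omega


lemma forward {n : ℕ} {a b : ℕ → ℕ} (_hn : 0 < n)
    (ha : IsPartition n a) (hb : IsPartition n b) (hcv : CoversD n a b) :
    (∃ j, j + 1 < n ∧ a j = b j + 1 ∧ b (j + 1) = a (j + 1) + 1 ∧
      ∀ i, i ≠ j → i ≠ j + 1 → a i = b i) ∨
    (∃ j k, j < k ∧ k < n ∧ a j = b j + 1 ∧ b k = a k + 1 ∧ b j = b k ∧
      ∀ i, i ≠ j → i ≠ k → a i = b i) := by
  obtain ⟨hdom, hne, hcov⟩ := hcv
  have hdomS : ∀ m, S b m ≤ S a m := hdom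
  have hSbn : ∀ m, n ≤ m → S b m = n := S_eq_of_ge hb
  have hSan : ∀ m, n ≤ m → S a m = n := S_eq_of_ge ha
  -- least index where prefix sums differ
  have hex : ∃ m, S b m < S a m := by
    by_contra h
    push_neg at h
    exact hne (eq_of_S_eq fun m => le_antisymm (h m) (hdomS m))
  obtain ⟨m0, hm0spec, hm0min⟩ :
      ∃ m0, S b m0 < S a m0 ∧ ∀ m, m < m0 → ¬ S b m < S a m :=
    ⟨Nat.find hex, Nat.find_spec hex, fun m hm => Nat.find_min hex hm⟩
  have hm0pos : 0 < m0 := by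
    rcases Nat.eq_zero_or_pos m0 with h | h
    · rw [h, S_zero, S_zero] at hm0spec
      omega
    · exact h
  -- j := m0 - 1
  obtain ⟨j, hjm0⟩ : ∃ j, m0 = j + 1 := ⟨m0 - 1, by omega⟩
  subst hjm0
  have heqpre : ∀ m, m ≤ j → S b m = S a m :=
    fun m hm => le_antisymm (hdomS m) (not_lt.mp (hm0min m (by omega)))
  have hpre : ∀ i, i < j → b i = a i := by
    intro i hi
    have e1 := S_succ b i
    have e2 := S_succ a i
    have e3 := heqpre i (by omega)
    have e4 := heqpre (i+1) (by omega)
    omega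
  have hbja : b j < a j := by
    have e1 := S_succ b j
    have e2 := S_succ a j
    have e3 := heqpre j le_rfl
    omega
  have hjn : j + 1 < n := by
    by_contra h
    push_neg at h
    rw [hSbn (j+1) h, hSan (j+1) h] at hm0spec
    omega
  -- r : last index of the strict window starting at j+1
  have hex2 : ∃ m, j + 1 < m ∧ S b m = S a m :=
    ⟨n, by omega, by rw [hSbn n le_rfl, hSan n le_rfl]⟩
  obtain ⟨r1, ⟨hr1j, hr1e⟩, hr1min⟩ :
      ∃ r1, (j + 1 < r1 ∧ S b r1 = S a r1) ∧
        ∀ m, m < r1 → j + 1 < m → S b m < S a m := by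
    refine ⟨Nat.find hex2, Nat.find_spec hex2, fun m hm h1 => ?_⟩
    have := Nat.find_min hex2 hm
    have h2 := hdomS m
    omega
  obtain ⟨r, hrr1⟩ : ∃ r, r1 = r + 1 := ⟨r1 - 1, by omega⟩
  subst hrr1
  have hjr : j + 1 ≤ r := by omega
  have hwin : ∀ m, j < m → m ≤ r → S b m < S a m := by
    intro m h1 h2
    rcases eq_or_ne m (j+1) with rfl | hm
    · exact hm0spec
    · exact hr1min m (by omega) (by omega)
  have hr1 : S b (r+1) = S a (r+1) := hr1e
  have hrn : r < n := by
    by_contra h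
    push_neg at h
    have := hwin r (by omega) le_rfl
    rw [hSbn r h, hSan r h] at this
    omega
  have hj' : ∀ i, i < j → b j < b i := by
    intro i hi
    have e1 := hpre i hi
    have e2 := ha.1 i j (by omega)
    omega
  have hbar : a r < b r := by
    have e1 := S_succ b r
    have e2 := S_succ a r
    have e3 := hwin r (by omega) le_rfl
    omega
  have hk'r : b (r+1) < b r := by
    have e0 := hr1
    have e1 : S b (r+2) = S b (r+1) + b (r+1) := S_succ b (r+1)
    have e2 : S a (r+2) = S a (r+1) + a (r+1) := S_succ a (r+1)
    have e3 := hdomS (r+2)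
    have e4 := ha.1 r (r+1) (by omega)
    omega
  have hmv : mv b j r = a :=
    contra hb hdom hcov hwin le_rfl (by omega) le_rfl hrn hj' hk'r
  have haj : a j = b j + 1 := by rw [← hmv, mv_j]
  have har : a r = b r - 1 := by rw [← hmv, mv_k b (by omega : j ≠ r)]
  have hoth : ∀ i, i ≠ j → i ≠ r → a i = b i := by
    intro i h1 h2
    rw [← hmv, mv_o b h1 h2]
  rcases eq_or_ne r (j+1) with hre | hrne
  · left
    refine ⟨j, by omega, haj, by rw [← hre]; omega, fun i h1 h2 => hoth i h1 (by omega)⟩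
  · right
    have hjr2 : j + 2 ≤ r := by omega
    have hbjr : b j = b r := by
      by_contra hne2
      have hbgt : b r < b j := by
        have := hb.1 j r (by omega)
        omega
      -- t : first descent at or after j
      have hext : ∃ m, j ≤ m ∧ b (m+1) < b m := ⟨r, by omega, hk'r⟩
      obtain ⟨t, ⟨ht1, ht2⟩, htmin⟩ :
          ∃ t, (j ≤ t ∧ b (t+1) < b t) ∧ ∀ m, m < t → j ≤ m → b m ≤ b (m+1) := by
        refine ⟨Nat.find hext, Nat.find_spec hext, fun m hm h1 => ?_⟩
        have := Nat.find_min hext hm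
        omega
      have htr : t < r := by
        by_contra h
        push_neg at h
        have : b j ≤ b r :=
          no_descent_const r (by omega) (fun m hm1 hm2 => htmin m (by omega) hm1)
        omega
      have hbt : b j ≤ b t :=
        no_descent_const t ht1 (fun m hm1 hm2 => htmin m (by omega) hm1)
      rcases eq_or_ne t j with hte | hte
      · -- t = j, so b (j+1) < b j
        rcases Nat.lt_or_ge (b r) (b (r-1)) with hdesc | hflat
        · -- use the move (j, r-1)
          have h2 : mv b j (r-1) = a := by
            refine contra hb hdom hcov hwin le_rfl (by omega) (by omega) hrn hj' ?_
            rw [show r - 1 + 1 = r from by omega]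
            exact hdesc
          have h3 := congrFun h2 r
          rw [mv_o b (by omega : r ≠ j) (by omega : r ≠ r - 1)] at h3
          omega
        · -- b (r-1) = b r ; s : least index with b s ≤ b r
          have hexs : ∃ m, b m ≤ b r := ⟨r, le_rfl⟩
          obtain ⟨sidx, hs1, hsmin, hsr⟩ :
              ∃ s, b s ≤ b r ∧ (∀ m, m < s → b r < b m) ∧ s ≤ r - 1 :=
            ⟨Nat.find hexs, Nat.find_spec hexs,
              fun m hm => by have := Nat.find_min hexs hm; omega,
              Nat.find_min' hexs hflat⟩
          have hsj : j < sidx := by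
            by_contra h
            push_neg at h
            have := hb.1 sidx j h
            omega
          have hbs : b sidx = b r := by
            have := hb.1 sidx r (by omega)
            omega
          have h2 : mv b sidx r = a :=
            contra hb hdom hcov hwin (by omega) (by omega) le_rfl hrn
              (fun i hi => by have := hsmin i hi; omega) hk'r
          have h3 := congrFun h2 j
          rw [mv_o b (by omega : j ≠ sidx) (by omega : j ≠ r)] at h3
          omega
      · -- t > j : use the move (j, t)
        have h2 : mv b j t = a :=
          contra hb hdom hcov hwin le_rfl (by omega) (by omega) hrn hj' ht2
        have h3 := congrFun h2 t
        rw [mv_k b (by omega : j ≠ t)] at h3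
        have h4 := hoth t (by omega) (by omega)
        have h5 := hb.1 t r (by omega)
        omega
    exact ⟨j, r, by omega, hrn, haj, by omega, hbjr, hoth⟩

end Bry

/-- Brylawski's characterization of the covering relation in the dominance
lattice (indices written 0-based). -/
theorem stmt8 (n : ℕ) (hn : 0 < n) :
    ∀ a b, IsPartition n a → IsPartition n b →
      (CoversD n a b ↔
        (∃ j, j + 1 < n ∧ a j = b j + 1 ∧ b (j + 1) = a (j + 1) + 1 ∧
          ∀ i, i ≠ j → i ≠ j + 1 → a i = b i) ∨
        (∃ j k, j < k ∧ k < n ∧ a j = b j + 1 ∧ b k = a k + 1 ∧ b j = b k ∧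
          ∀ i, i ≠ j → i ≠ k → a i = b i)) := by
  intro a b ha hb
  constructor
  · exact fun hcv => Bry.forward hn ha hb hcv
  · rintro (⟨j, hjn, haj, hbj1, hoth⟩ | ⟨j, k, hjk, hkn, haj, hbk, hbb, hoth⟩)
    · exact Bry.backward ha hb (Nat.lt_succ_self j) hjn haj hbj1 (Or.inl rfl) hoth
    · exact Bry.backward ha hb hjk hkn haj hbk (Or.inr hbb) hoth
end

section
/- For n ≥ 3, every join-irreducible partition of n other than (2,1,1,…,1) has exactly one son that is a join-irreducible partition of n+1, and the partition (2,1,…,1) has exactly two sons that are join-irreducible partitions of n+1. -/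
/-- The minimum partition (1,1,…,1) of n. -/
def ones (n : ℕ) : ℕ → ℕ := fun i => if i < n then 1 else 0

/-- A partition of n is join-irreducible in the dominance lattice: it is not
the minimum and whenever it is the join of two partitions it equals one of them. -/
def JoinIrr (n : ℕ) (a : ℕ → ℕ) : Prop :=
  IsPartition n a ∧ a ≠ ones n ∧
    ∀ b c, IsPartition n b → IsPartition n c → IsSupOf n b c a → a = b ∨ a = c
/-- Remove one grain from the first column. -/
def dec1 (a : ℕ → ℕ) : ℕ → ℕ := fun i => if i = 0 then a 0 - 1 else a i

/-- Slippery plateau at the first column, of length l ≥ 1 (0-based entries):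
entries 0..l are equal and the height difference at position l is 1. -/
def SlipperyPlateau1 (a : ℕ → ℕ) (l : ℕ) : Prop :=
  1 ≤ l ∧ (∀ i ≤ l, a i = a 0) ∧ a l = a (l + 1) + 1

/-- Non-slippery plateau at the first column: a plateau of length ≥ 1 ending at a cliff. -/
def NonSlipperyPlateau1 (a : ℕ → ℕ) : Prop :=
  ∃ k, 1 ≤ k ∧ (∀ i ≤ k, a i = a 0) ∧ a (k + 1) + 2 ≤ a k

/-- Slippery step at the first column. -/
def SlipperyStep1 (a : ℕ → ℕ) : Prop := ∃ l, SlipperyPlateau1 (dec1 a) l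

/-- Non-slippery step at the first column. -/
def NonSlipperyStep1 (a : ℕ → ℕ) : Prop := NonSlipperyPlateau1 (dec1 a)

/-- b is a son of the partition a of n: either the left son α↓₁, or the right
son α↓₂ (for a step at 1), or α↓_{l+2} (for a slippery plateau of length l at 1). -/
def Son (n : ℕ) (a b : ℕ → ℕ) : Prop :=
  IsPartition n a ∧ IsPartition (n + 1) b ∧
    (b = downAt 0 a ∨
     ((SlipperyStep1 a ∨ NonSlipperyStep1 a) ∧ b = downAt 1 a) ∨
     (∃ l, SlipperyPlateau1 a l ∧ b = downAt (l + 1) a))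

/-- The partition (2,1,…,1) of n. -/
def twoOnes (n : ℕ) : ℕ → ℕ := fun i => if i = 0 then 2 else if i < n - 1 then 1 else 0
open Finset in
lemma psum_mono_t (a : ℕ → ℕ) {t u : ℕ} (h : t ≤ u) :
    ∑ i ∈ Finset.range t, a i ≤ ∑ i ∈ Finset.range u, a i :=
  Finset.sum_le_sum_of_subset (Finset.range_subset_range.2 h)

lemma part_psum_eq {n : ℕ} {a : ℕ → ℕ} (h : IsPartition n a) {t : ℕ} (ht : n ≤ t) :
    ∑ i ∈ Finset.range t, a i = n := by
  have : ∑ i ∈ Finset.range t, a i = ∑ i ∈ Finset.range n, a i := by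
    apply (Finset.sum_subset (Finset.range_subset_range.2 ht) ?_).symm
    intro x _ hx
    exact h.2.2 x (by simpa using hx)
  rw [this, h.2.1]

lemma part_psum_le {n : ℕ} {a : ℕ → ℕ} (h : IsPartition n a) (t : ℕ) :
    ∑ i ∈ Finset.range t, a i ≤ n := by
  calc ∑ i ∈ Finset.range t, a i ≤ ∑ i ∈ Finset.range (max t n), a i :=
        psum_mono_t a (le_max_left _ _)
    _ = n := part_psum_eq h (le_max_right _ _)

lemma eq_of_psum_eq {a b : ℕ → ℕ}
    (h : ∀ t, ∑ i ∈ Finset.range t, a i = ∑ i ∈ Finset.range t, b i) : a = b := by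
  funext i
  have h1 := h (i + 1)
  have h2 := h i
  rw [Finset.sum_range_succ, Finset.sum_range_succ] at h1
  omega

lemma dom_antisymm {a b : ℕ → ℕ} (hab : Dom a b) (hba : Dom b a) : a = b :=
  eq_of_psum_eq fun t => le_antisymm (hab t) (hba t)

lemma psum_concave {a : ℕ → ℕ} (hmono : ∀ i j, i ≤ j → a j ≤ a i) (t : ℕ) :
    ∑ i ∈ Finset.range (t + 2), a i + ∑ i ∈ Finset.range t, a i ≤
      2 * ∑ i ∈ Finset.range (t + 1), a i := by
  rw [show t + 2 = (t+1)+1 from rfl, Finset.sum_range_succ (n := t+1), Finset.sum_range_succ (n := t)]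
  have := hmono t (t + 1) (by omega)
  omega

/-- nonincreasing from adjacent comparisons -/
lemma mono_of_adj {a : ℕ → ℕ} (h : ∀ t, a (t + 1) ≤ a t) :
    ∀ i j, i ≤ j → a j ≤ a i := by
  intro i j hij
  induction j with
  | zero => simp_all
  | succ k ih =>
    rcases Nat.eq_or_lt_of_le hij with rfl | hlt
    · exact le_refl _
    · exact le_trans (h k) (ih (by omega))
/-- move one grain from column i to column j -/
def mv (i j : ℕ) (a : ℕ → ℕ) : ℕ → ℕ :=
  fun t => if t = i then a i - 1 else if t = j then a j + 1 else a t

section Move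
variable {n i j : ℕ} {a : ℕ → ℕ}

structure MvOK (i j : ℕ) (a : ℕ → ℕ) : Prop where
  hij : i < j
  hsrc : a (i + 1) + 1 ≤ a i
  htgt : a j + 1 ≤ a (j - 1)
  hgap : a j + 2 ≤ a i

lemma mv_psum (h : MvOK i j a) (t : ℕ) :
    ∑ x ∈ Finset.range t, mv i j a x + (if i < t ∧ t ≤ j then 1 else 0) =
      ∑ x ∈ Finset.range t, a x := by
  have hij := h.hij
  have hai : 1 ≤ a i := by have := h.hgap; omega
  induction t with
  | zero => simp [hij]
  | succ k ih =>
    rw [Finset.sum_range_succ, Finset.sum_range_succ (f := a)]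
    by_cases hk : k = i
    · have hv : mv i j a k = a i - 1 := by simp [mv, hk]
      have hak : a k = a i := by rw [hk]
      have hI1 : (if i < k ∧ k ≤ j then (1:ℕ) else 0) = 0 := if_neg (by omega)
      have hI2 : (if i < k + 1 ∧ k + 1 ≤ j then (1:ℕ) else 0) = 1 :=
        if_pos ⟨by omega, by omega⟩
      rw [hI1] at ih
      rw [hI2, hv]
      omega
    · by_cases hk2 : k = j
      · have hv : mv i j a k = a j + 1 := by
          show (if k = i then a i - 1 else if k = j then a j + 1 else a k) = a j + 1
          rw [if_neg hk, if_pos hk2]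
        have hak : a k = a j := by rw [hk2]
        have hI1 : (if i < k ∧ k ≤ j then (1:ℕ) else 0) = 1 := if_pos (by omega)
        have hI2 : (if i < k + 1 ∧ k + 1 ≤ j then (1:ℕ) else 0) = 0 := if_neg (by omega)
        rw [hI1] at ih
        rw [hI2, hv]
        omega
      · have hv : mv i j a k = a k := by simp [mv, hk, hk2]
        have hIeq : (if i < k + 1 ∧ k + 1 ≤ j then (1:ℕ) else 0) =
            (if i < k ∧ k ≤ j then (1:ℕ) else 0) := by
          by_cases hc : i < k ∧ k ≤ j
          · rw [if_pos hc, if_pos (by omega)]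
          · rw [if_neg hc, if_neg (by omega)]
        rw [hIeq, hv]
        omega

lemma mv_dom (h : MvOK i j a) : Dom (mv i j a) a := by
  intro t
  have := mv_psum h t
  omega

lemma mv_ne (h : MvOK i j a) : mv i j a ≠ a := by
  intro he
  have h2 : mv i j a j = a j := congrFun he j
  have hij := h.hij
  rw [show mv i j a j = if j = i then a i - 1 else if j = j then a j + 1 else a j from rfl,
    if_neg (by omega : ¬ j = i), if_pos rfl] at h2
  omega

lemma mv_isPartition (hp : IsPartition n a) (h : MvOK i j a) :
    IsPartition n (mv i j a) := by
  have hij := h.hij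
  have hai2 : 2 ≤ a i := by have := h.hgap; omega
  have hin : i < n := by
    by_contra hc
    have := hp.2.2 i (by omega)
    omega
  have hjn : j + 1 ≤ n := by
    by_contra hc
    push_neg at hc
    have hj1 : 1 ≤ a (j - 1) := by have := h.htgt; omega
    have hj1n : j - 1 < n := by
      by_contra hc2
      have := hp.2.2 (j - 1) (by omega)
      omega
    have hjeq : j = n := by omega
    have hj1' : 1 ≤ a (n - 1) := by rw [(by omega : n - 1 = j - 1)]; exact hj1
    have hlow : ∀ t, t < n → 1 ≤ a t := fun t ht =>
      le_trans hj1' (hp.1 t (n - 1) (by omega))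
    have hlt : (n:ℕ) < n := by
      calc n = ∑ _x ∈ Finset.range n, (1:ℕ) := by simp
        _ < ∑ x ∈ Finset.range n, a x := by
            apply Finset.sum_lt_sum
            · intro x hx; exact hlow x (by simpa using hx)
            · exact ⟨i, Finset.mem_range.2 hin, by omega⟩
        _ = n := hp.2.1
    omega
  refine ⟨?_, ?_, ?_⟩
  · apply mono_of_adj
    intro t
    simp only [mv]
    by_cases e1 : t + 1 = i
    · rw [if_pos e1, if_neg (show ¬ t = i by omega), if_neg (show ¬ t = j by omega)]
      have := hp.1 t i (by omega)
      omega
    · by_cases e2 : t = i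
      · rw [if_neg e1, if_pos e2]
        by_cases e3 : t + 1 = j
        · rw [if_pos e3]
          have hg := h.hgap
          omega
        · rw [if_neg e3, e2]
          have hs := h.hsrc
          have hg := h.hgap
          omega
      · by_cases e3 : t + 1 = j
        · rw [if_neg e1, if_pos e3, if_neg e2, if_neg (show ¬ t = j by omega)]
          have ht := h.htgt
          rw [(show j - 1 = t by omega)] at ht
          exact ht
        · by_cases e4 : t = j
          · rw [if_neg e1, if_neg e3, if_neg e2, if_pos e4]
            have := hp.1 t (t + 1) (by omega)
            rw [← e4]
            omega
          · rw [if_neg e1, if_neg e3, if_neg e2, if_neg e4]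
            exact hp.1 t (t + 1) (by omega)
  · have hps := mv_psum h n
    rw [if_neg (by omega : ¬ (i < n ∧ n ≤ j))] at hps
    rw [hp.2.1] at hps
    omega
  · intro t ht
    have hta : a t = 0 := hp.2.2 t ht
    simp only [mv]
    rw [if_neg (by omega : ¬ t = i), if_neg (by omega : ¬ t = j)]
    exact hta

/-- two moves with disjoint dip intervals kill join-irreducibility -/
lemma notJI_disj {i1 j1 i2 j2 : ℕ} (hp : IsPartition n a)
    (h1 : MvOK i1 j1 a) (h2 : MvOK i2 j2 a) (hd : j1 ≤ i2) :
    ¬ JoinIrr n a := by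
  intro hJI
  have hb := mv_isPartition hp h1
  have hc := mv_isPartition hp h2
  have hsup : IsSupOf n (mv i1 j1 a) (mv i2 j2 a) a := by
    refine ⟨hp, mv_dom h1, mv_dom h2, ?_⟩
    intro d _ hbd hcd t
    by_cases hcase : i1 < t ∧ t ≤ j1
    · have hps := mv_psum h2 t
      rw [if_neg (by omega : ¬ (i2 < t ∧ t ≤ j2))] at hps
      calc ∑ x ∈ Finset.range t, a x = ∑ x ∈ Finset.range t, mv i2 j2 a x := hps.symm
        _ ≤ _ := hcd t
    · have hps := mv_psum h1 t
      rw [if_neg hcase] at hps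
      calc ∑ x ∈ Finset.range t, a x = ∑ x ∈ Finset.range t, mv i1 j1 a x := hps.symm
        _ ≤ _ := hbd t
  rcases hJI.2.2 _ _ hb hc hsup with he | he
  · exact mv_ne h1 he.symm
  · exact mv_ne h2 he.symm

/-- two moves whose dip intervals overlap in exactly the single point j1,
with a unit drop at j1, kill join-irreducibility -/
lemma notJI_ovr {i1 j1 i2 j2 : ℕ} (hp : IsPartition n a)
    (h1 : MvOK i1 j1 a) (h2 : MvOK i2 j2 a) (hd : i2 + 1 = j1) (hj : j1 ≤ j2)
    (hdrop : a j1 + 1 = a (j1 - 1)) :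
    ¬ JoinIrr n a := by
  intro hJI
  have hb := mv_isPartition hp h1
  have hc := mv_isPartition hp h2
  have hsup : IsSupOf n (mv i1 j1 a) (mv i2 j2 a) a := by
    refine ⟨hp, mv_dom h1, mv_dom h2, ?_⟩
    intro d hd' hbd hcd
    have key : ∀ t, t ≠ j1 →
        ∑ x ∈ Finset.range t, a x ≤ ∑ x ∈ Finset.range t, d x := by
      intro t ht
      by_cases hcase : i1 < t ∧ t ≤ j1
      · have hps := mv_psum h2 t
        rw [if_neg (by omega : ¬ (i2 < t ∧ t ≤ j2))] at hps
        calc ∑ x ∈ Finset.range t, a x = ∑ x ∈ Finset.range t, mv i2 j2 a x := hps.symm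
          _ ≤ _ := hcd t
      · have hps := mv_psum h1 t
        rw [if_neg hcase] at hps
        calc ∑ x ∈ Finset.range t, a x = ∑ x ∈ Finset.range t, mv i1 j1 a x := hps.symm
          _ ≤ _ := hbd t
    intro t
    by_cases ht : t = j1
    · rw [ht]
      have hj1pos : 1 ≤ j1 := by have := h1.hij; omega
      have hlh := key (j1 - 1) (by omega)
      have hrh := key (j1 + 1) (by omega)
      have hconc := psum_concave hd'.1 (j1 - 1)
      rw [(by omega : j1 - 1 + 2 = j1 + 1), (by omega : j1 - 1 + 1 = j1)] at hconc
      have e1 : ∑ x ∈ Finset.range (j1 + 1), a x =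
          ∑ x ∈ Finset.range j1, a x + a j1 := Finset.sum_range_succ a j1
      have e1' : ∑ x ∈ Finset.range (j1 + 1), d x =
          ∑ x ∈ Finset.range j1, d x + d j1 := Finset.sum_range_succ d j1
      have e2 : ∑ x ∈ Finset.range j1, a x =
          ∑ x ∈ Finset.range (j1 - 1), a x + a (j1 - 1) := by
        conv_lhs => rw [(by omega : j1 = (j1 - 1) + 1)]
        exact Finset.sum_range_succ a (j1 - 1)
      omega
    · exact key t ht
  rcases hJI.2.2 _ _ hb hc hsup with he | he
  · exact mv_ne h1 he.symm
  · exact mv_ne h2 he.symm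

/-- criterion for join-irreducibility: a unique maximal element below -/
lemma joinIrr_of_unique (hp : IsPartition n a) (hne : a ≠ ones n)
    {m : ℕ → ℕ} (hm : IsPartition n m) (hma : Dom m a) (hne' : m ≠ a)
    (huniq : ∀ d, IsPartition n d → Dom d a → d ≠ a → Dom d m) :
    JoinIrr n a := by
  refine ⟨hp, hne, ?_⟩
  intro b c hb hc hsup
  by_contra hcon
  push_neg at hcon
  have hbm : Dom b m := huniq b hb hsup.2.1 (fun he => hcon.1 he.symm)
  have hcm : Dom c m := huniq c hc hsup.2.2.1 (fun he => hcon.2 he.symm)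
  have ham : Dom a m := hsup.2.2.2 m hm hbm hcm
  exact hne' (dom_antisymm hma ham)

end Move
/-- the partition (c^m, (c-1)^r, 1^s) -/
def P (c m r s : ℕ) : ℕ → ℕ := fun i =>
  if i < m then c else if i < m + r then c - 1 else if i < m + r + s then 1 else 0

section Pfacts
variable {n c m r s : ℕ}

lemma P_lt_m {i : ℕ} (h : i < m) : P c m r s i = c := if_pos h
lemma P_blk2 {i : ℕ} (h1 : m ≤ i) (h2 : i < m + r) : P c m r s i = c - 1 := by
  unfold P; rw [if_neg (by omega), if_pos h2]
lemma P_blk3 {i : ℕ} (h1 : m + r ≤ i) (h2 : i < m + r + s) : P c m r s i = 1 := by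
  unfold P; rw [if_neg (by omega), if_neg (by omega), if_pos h2]
lemma P_big {i : ℕ} (h : m + r + s ≤ i) : P c m r s i = 0 := by
  unfold P; rw [if_neg (by omega), if_neg (by omega), if_neg (by omega)]

lemma P_mono (hc : 2 ≤ c) : ∀ i j, i ≤ j → P c m r s j ≤ P c m r s i := by
  intro i j hij
  unfold P
  split_ifs <;> omega

lemma psum_P (hc : 1 ≤ c) (t : ℕ) : ∑ x ∈ Finset.range t, P c m r s x
    = c * min t m + (c - 1) * (min t (m + r) - min t m)
      + (min t (m + r + s) - min t (m + r)) := by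
  induction t with
  | zero => simp
  | succ k ih =>
    rw [Finset.sum_range_succ, ih]
    by_cases h1 : k < m
    · rw [P_lt_m h1, min_eq_left (by omega : k ≤ m), min_eq_left (by omega : k + 1 ≤ m),
        min_eq_left (by omega : k ≤ m + r), min_eq_left (by omega : k + 1 ≤ m + r),
        min_eq_left (by omega : k ≤ m + r + s), min_eq_left (by omega : k + 1 ≤ m + r + s)]
      simp [Nat.sub_self, Nat.mul_succ]
    · by_cases h2 : k < m + r
      · rw [P_blk2 (by omega) h2, min_eq_right (by omega : m ≤ k),
          min_eq_right (by omega : m ≤ k + 1),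
          min_eq_left (by omega : k ≤ m + r), min_eq_left (by omega : k + 1 ≤ m + r),
          min_eq_left (by omega : k ≤ m + r + s), min_eq_left (by omega : k + 1 ≤ m + r + s),
          (show k + 1 - m = (k - m) + 1 by omega), Nat.mul_succ]
        omega
      · by_cases h3 : k < m + r + s
        · rw [P_blk3 (by omega) h3, min_eq_right (by omega : m ≤ k),
            min_eq_right (by omega : m ≤ k + 1),
            min_eq_right (by omega : m + r ≤ k), min_eq_right (by omega : m + r ≤ k + 1),
            min_eq_left (by omega : k ≤ m + r + s), min_eq_left (by omega : k + 1 ≤ m + r + s)]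
          omega
        · rw [P_big (by omega), min_eq_right (by omega : m ≤ k),
            min_eq_right (by omega : m ≤ k + 1),
            min_eq_right (by omega : m + r ≤ k), min_eq_right (by omega : m + r ≤ k + 1),
            min_eq_right (by omega : m + r + s ≤ k), min_eq_right (by omega : m + r + s ≤ k + 1)]
          omega

lemma P_supp (hp : IsPartition n (P c m r s)) (hc : 2 ≤ c) : m + r + s ≤ n := by
  by_contra hcon
  push_neg at hcon
  have h0 := hp.2.2 n le_rfl
  unfold P at h0
  split_ifs at h0 <;> omega

lemma P_sum (hp : IsPartition n (P c m r s)) (hc : 2 ≤ c) :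
    n = c * m + (c - 1) * r + s := by
  have hsupp := P_supp hp hc
  have h := hp.2.1
  rw [psum_P (by omega), min_eq_right (by omega : m ≤ n),
    min_eq_right (by omega : m + r ≤ n), min_eq_right (by omega : m + r + s ≤ n),
    (show m + r - m = r by omega), (show m + r + s - (m + r) = s by omega)] at h
  exact h.symm

/-- value of partial sums of P at key points -/
lemma psum_P_at (hc : 1 ≤ c) (t : ℕ) (h1 : t ≤ m) :
    ∑ x ∈ Finset.range t, P c m r s x = c * t := by
  rw [psum_P hc, min_eq_left h1, min_eq_left (by omega), min_eq_left (by omega)]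
  simp

lemma psum_P_at2 (hc : 1 ≤ c) (t : ℕ) (h1 : m ≤ t) (h2 : t ≤ m + r) :
    ∑ x ∈ Finset.range t, P c m r s x = c * m + (c - 1) * (t - m) := by
  rw [psum_P hc, min_eq_right h1, min_eq_left h2, min_eq_left (by omega)]
  omega

lemma psum_P_at3 (hc : 1 ≤ c) (t : ℕ) (h1 : m + r ≤ t) (h2 : t ≤ m + r + s) :
    ∑ x ∈ Finset.range t, P c m r s x = c * m + (c - 1) * r + (t - m - r) := by
  rw [psum_P hc, min_eq_right (by omega), min_eq_right h1, min_eq_left h2,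
    (show m + r - m = r by omega)]
  omega

/-- (3^m, 2^r, 1^s) with m,r,s ≥ 1 is not join-irreducible -/
lemma notJI_P3 (hm : 1 ≤ m) (hr : 1 ≤ r) (hs : 1 ≤ s)
    (hp : IsPartition n (P 3 m r s)) : ¬ JoinIrr n (P 3 m r s) := by
  have e1 : P 3 m r s (m - 1) = 3 := P_lt_m (by omega)
  have e2 : P 3 m r s (m - 1 + 1) = 2 := by
    rw [show m - 1 + 1 = m by omega]; exact P_blk2 (by omega) (by omega)
  have e3 : P 3 m r s (m + r - 1) = 2 := P_blk2 (by omega) (by omega)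
  have e3' : P 3 m r s (m + r - 1 + 1) = 1 := by
    rw [show m + r - 1 + 1 = m + r by omega]; exact P_blk3 (by omega) (by omega)
  have e4 : P 3 m r s (m + r) = 1 := P_blk3 (by omega) (by omega)
  have e5 : P 3 m r s (m + r + s) = 0 := P_big (by omega)
  have e6 : P 3 m r s (m + r + s - 1) = 1 := P_blk3 (by omega) (by omega)
  exact notJI_ovr hp
    (⟨by omega, by omega, by omega, by omega⟩ : MvOK (m - 1) (m + r) (P 3 m r s))
    (⟨by omega, by omega, by omega, by omega⟩ : MvOK (m + r - 1) (m + r + s) (P 3 m r s))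
    (by omega) (by omega) (by omega)

/-- the left son of (c^m,(c-1)^r,1^s) for c ≥ 3, r ≥ 1 is not join-irreducible -/
lemma notJI_L (hc : 3 ≤ c) (hm : 1 ≤ m) (hr : 1 ≤ r)
    (hp : IsPartition n (downAt 0 (P c m r s))) : ¬ JoinIrr n (downAt 0 (P c m r s)) := by
  set L := downAt 0 (P c m r s) with hL
  have hL0 : L 0 = c + 1 := by
    show (if (0:ℕ) = 0 then P c m r s 0 + 1 else P c m r s 0) = c + 1
    rw [if_pos rfl, P_lt_m (by omega)]
  have hLpos : ∀ i, 1 ≤ i → L i = P c m r s i := by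
    intro i hi
    show (if i = 0 then P c m r s i + 1 else P c m r s i) = P c m r s i
    rw [if_neg (by omega)]
  have e1 : L (0 + 1) ≤ c := by
    rw [hLpos (0 + 1) le_rfl]
    rcases Nat.lt_or_ge (0 + 1) m with h | h
    · rw [P_lt_m h]
    · rw [P_blk2 (by omega) (by omega)]; omega
  have em : L m = c - 1 := by rw [hLpos m hm]; exact P_blk2 le_rfl (by omega)
  have em1 : c ≤ L (m - 1) := by
    rcases Nat.lt_or_ge 0 (m - 1) with h | h
    · rw [hLpos (m - 1) (by omega), P_lt_m (by omega)]
    · rw [show m - 1 = 0 by omega, hL0]; omega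
  have emr : L (m + r - 1) = c - 1 := by
    rw [hLpos (m + r - 1) (by omega)]; exact P_blk2 (by omega) (by omega)
  have emr' : L (m + r - 1 + 1) ≤ 1 := by
    rw [show m + r - 1 + 1 = m + r by omega, hLpos (m + r) (by omega)]
    rcases Nat.lt_or_ge (m + r) (m + r + s) with h | h
    · rw [P_blk3 le_rfl h]
    · rw [P_big (by omega)]; omega
  have emrs : L (m + r + s) = 0 := by
    rw [hLpos (m + r + s) (by omega)]; exact P_big le_rfl
  have emrs1 : 1 ≤ L (m + r + s - 1) := by
    rw [hLpos (m + r + s - 1) (by omega)]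
    rcases Nat.lt_or_ge (m + r + s - 1) (m + r) with h | h
    · rw [P_blk2 (by omega) h]; omega
    · rw [P_blk3 h (by omega)]
  exact notJI_disj hp
    (⟨hm, by omega, by omega, by omega⟩ : MvOK 0 m L)
    (⟨by omega, by omega, by omega, by omega⟩ : MvOK (m + r - 1) (m + r + s) L)
    (by omega)

end Pfacts
section Forced
variable {n c m r s : ℕ} {d : ℕ → ℕ}

lemma le_head {a : ℕ → ℕ} (hd : IsPartition n d) (hdom : Dom d a) (i : ℕ) : d i ≤ a 0 := by
  have h1 := hdom 1
  rw [Finset.sum_range_one, Finset.sum_range_one] at h1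
  exact le_trans (hd.1 0 i (Nat.zero_le i)) h1

lemma psum_split (d : ℕ → ℕ) {u v : ℕ} (h : u ≤ v) :
    ∑ x ∈ Finset.range v, d x = ∑ x ∈ Finset.range u, d x + ∑ x ∈ Finset.Ico u v, d x :=
  (Finset.sum_range_add_sum_Ico d h).symm

lemma zero_tail {K : ℕ} (hd : IsPartition n d)
    (h : ∑ x ∈ Finset.range K, d x = n) : ∀ i, K ≤ i → d i = 0 := by
  intro i hi
  have h1 : ∑ x ∈ Finset.range i, d x = n :=
    le_antisymm (part_psum_le hd i) (h ▸ psum_mono_t d hi)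
  have h2 : ∑ x ∈ Finset.range (i + 1), d x = n :=
    le_antisymm (part_psum_le hd (i + 1)) (h ▸ psum_mono_t d (by omega))
  rw [Finset.sum_range_succ] at h2
  omega

lemma all_eq_of_sum_eq {v : ℕ} {t : Finset ℕ} (hb : ∀ i ∈ t, d i ≤ v)
    (h : ∑ i ∈ t, d i = t.card * v) : ∀ i ∈ t, d i = v := by
  intro i hi
  refine (Finset.sum_eq_sum_iff_of_le hb).1 ?_ i hi
  rw [Finset.sum_const, smul_eq_mul, h]

lemma eq_P_ext (h1 : ∀ i < m, d i = c) (h2 : ∀ i, m ≤ i → i < m + r → d i = c - 1)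
    (h3 : ∀ i, m + r ≤ i → i < m + r + s → d i = 1)
    (h4 : ∀ i, m + r + s ≤ i → d i = 0) :
    d = P c m r s := by
  funext i
  unfold P
  split_ifs with ha hb hcc
  · exact h1 i ha
  · exact h2 i (by omega) hb
  · exact h3 i (by omega) hcc
  · exact h4 i (by omega)

/-- if the partial sums of d agree with those of (c^m,(c-1)^r,1^s) at m+r, then d is it -/
lemma forced_main (hp : IsPartition n (P c m r s)) (hc : 2 ≤ c) (hm : 1 ≤ m)
    (hd : IsPartition n d) (hdom : Dom d (P c m r s))
    (hsum : ∑ x ∈ Finset.range (m + r), d x = c * m + (c - 1) * r) :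
    d = P c m r s := by
  have hsupp := P_supp hp hc
  have hn := P_sum hp hc
  have hdc : ∀ i, d i ≤ c := by
    intro i
    have := le_head hd hdom i
    rwa [P_lt_m (show 0 < m by omega)] at this
  have hle1 : ∑ x ∈ Finset.range m, d x ≤ c * m := by
    have h := hdom m
    rwa [psum_P_at (by omega) m le_rfl] at h
  have hdm : r = 0 ∨ d m ≤ c - 1 := by
    rcases Nat.eq_zero_or_pos r with h | h
    · exact Or.inl h
    · right
      by_contra hcon
      push_neg at hcon
      have hge : ∀ i ∈ Finset.range (m + 1), c ≤ d i := by
        intro i hi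
        have h2 := hd.1 i m (by simpa using Nat.lt_succ_iff.1 (Finset.mem_range.1 hi))
        omega
      have hlow : ∑ x ∈ Finset.range (m + 1), (fun _ => c) x ≤
          ∑ x ∈ Finset.range (m + 1), d x := Finset.sum_le_sum hge
      rw [Finset.sum_const, Finset.card_range, smul_eq_mul] at hlow
      have hup := hdom (m + 1)
      rw [psum_P_at2 (by omega) (m + 1) (by omega) (by omega),
        (show m + 1 - m = 1 by omega), mul_one] at hup
      have hmul : (m + 1) * c = c * m + c := by ring
      omega
  have hmid_le : ∑ x ∈ Finset.Ico m (m + r), d x ≤ (c - 1) * r := by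
    rcases hdm with h | h
    · simp [h]
    · have hb : ∑ x ∈ Finset.Ico m (m + r), d x ≤
          ∑ x ∈ Finset.Ico m (m + r), (fun _ => c - 1) x :=
        Finset.sum_le_sum (fun i hi => le_trans (hd.1 m i (Finset.mem_Ico.1 hi).1) h)
      rwa [Finset.sum_const, Nat.card_Ico, (show m + r - m = r by omega), smul_eq_mul,
        mul_comm] at hb
  have hsplit := psum_split d (show m ≤ m + r by omega)
  have hfirst : ∑ x ∈ Finset.range m, d x = c * m := by omega
  have hmid : ∑ x ∈ Finset.Ico m (m + r), d x = (c - 1) * r := by omega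
  have hblock1 : ∀ i < m, d i = c := by
    intro i hi
    refine all_eq_of_sum_eq (fun j _ => hdc j) ?_ i (Finset.mem_range.2 hi)
    rw [Finset.card_range, mul_comm]
    exact hfirst
  have hblock2 : ∀ i, m ≤ i → i < m + r → d i = c - 1 := by
    intro i h1 h2
    have hrpos : 1 ≤ r := by omega
    rcases hdm with h | h
    · omega
    · refine all_eq_of_sum_eq
        (fun j hj => le_trans (hd.1 m j (Finset.mem_Ico.1 hj).1) h) ?_ i
        (Finset.mem_Ico.2 ⟨h1, h2⟩)
      rw [Nat.card_Ico, (show m + r - m = r by omega), mul_comm]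
      exact hmid
  rcases Nat.eq_zero_or_pos s with hs | hs
  · have hzero : ∀ i, m + r ≤ i → d i = 0 := zero_tail hd (by rw [hsum]; omega)
    exact eq_P_ext hblock1 hblock2 (fun i hi1 hi2 => by omega)
      (fun i hi => hzero i (by omega))
  · have hdB : d (m + r) ≤ 1 := by
      have h1 := hdom (m + r + 1)
      rw [psum_P_at3 (by omega) (m + r + 1) (by omega) (by omega),
        (show m + r + 1 - m - r = 1 by omega), Finset.sum_range_succ] at h1
      omega
    have hones : ∀ i, m + r ≤ i → i < m + r + s → d i = 1 := by
      intro j hj1 hj2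
      have hle : d j ≤ 1 := le_trans (hd.1 (m + r) j hj1) hdB
      by_contra hcon
      have hdj : d j = 0 := by omega
      have hz : ∀ i, j ≤ i → d i = 0 := by
        intro i hi
        have := hd.1 j i hi
        omega
      have hsn : ∑ x ∈ Finset.range n, d x = ∑ x ∈ Finset.range j, d x := by
        rw [psum_split d (show j ≤ n by omega)]
        have hz2 : ∑ x ∈ Finset.Ico j n, d x = 0 :=
          Finset.sum_eq_zero (fun x hx => hz x (Finset.mem_Ico.1 hx).1)
        omega
      have hub : ∑ x ∈ Finset.range j, d x ≤ c * m + (c - 1) * r + (j - m - r) := by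
        have h := hdom j
        rwa [psum_P_at3 (by omega) j (by omega) (by omega)] at h
      have hfull := hd.2.1
      omega
    have hfull : ∑ x ∈ Finset.range (m + r + s), d x = n := by
      rw [psum_split d (show m + r ≤ m + r + s by omega), hsum]
      have hone : ∑ x ∈ Finset.Ico (m + r) (m + r + s), d x = s := by
        rw [Finset.sum_congr rfl (fun x hx => hones x (Finset.mem_Ico.1 hx).1
          (Finset.mem_Ico.1 hx).2), Finset.sum_const, Nat.card_Ico, smul_eq_mul]
        omega
      omega
    exact eq_P_ext hblock1 hblock2 hones (zero_tail hd hfull)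

/-- the c = 2 variant: forced equality from agreement anywhere on the dip interval -/
lemma forced_two (hp : IsPartition n (P 2 m 0 s)) (hm : 1 ≤ m) (hs : 1 ≤ s)
    (hd : IsPartition n d) (hdom : Dom d (P 2 m 0 s)) {t : ℕ} (ht1 : m ≤ t)
    (ht2 : t ≤ m + s) (hsum : ∑ x ∈ Finset.range t, d x = m + t) :
    d = P 2 m 0 s := by
  have hsupp := P_supp hp (by omega)
  have hn : n = 2 * m + s := by have := P_sum hp (by omega); omega
  have hd2 : ∀ i, d i ≤ 2 := by
    intro i
    have := le_head hd hdom i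
    rwa [P_lt_m (show 0 < m by omega)] at this
  have hblock1 : ∀ j < m, d j = 2 := by
    have htwo : ∀ j < m, 2 ≤ d j := by
      intro j hj
      by_contra hcon
      have hj1 : ∀ i ∈ Finset.Ico j t, d i ≤ 1 := by
        intro i hi
        have := hd.1 j i (Finset.mem_Ico.1 hi).1
        omega
      have hup1 : ∑ x ∈ Finset.range j, d x ≤ 2 * j := by
        have h := hdom j
        rwa [psum_P_at (by omega) j (by omega)] at h
      have hup2 : ∑ x ∈ Finset.Ico j t, d x ≤ t - j := by
        have hb : ∑ x ∈ Finset.Ico j t, d x ≤ ∑ x ∈ Finset.Ico j t, (fun _ => 1) x :=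
          Finset.sum_le_sum hj1
        rwa [Finset.sum_const, Nat.card_Ico, smul_eq_mul, mul_one] at hb
      have hsplit := psum_split d (show j ≤ t by omega)
      omega
    intro j hj
    have := hd2 j
    have := htwo j hj
    omega
  have hfirst : ∑ x ∈ Finset.range m, d x = 2 * m := by
    rw [Finset.sum_congr rfl (fun x hx => hblock1 x (Finset.mem_range.1 hx)),
      Finset.sum_const, Finset.card_range, smul_eq_mul]
    ring
  have hdm : d m ≤ 1 := by
    have h1 := hdom (m + 1)
    rw [psum_P_at3 (by omega) (m + 1) (by omega) (by omega),
      Finset.sum_range_succ] at h1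
    omega
  have hone_le : ∀ i, m ≤ i → d i ≤ 1 := fun i hi => le_trans (hd.1 m i hi) hdm
  have hones : ∀ i, m ≤ i → i < m + s → d i = 1 := by
    intro j hj1 hj2
    rcases Nat.lt_or_ge j t with hjt | hjt
    · -- in the forced middle [m, t)
      have hmidsum : ∑ x ∈ Finset.Ico m t, d x = t - m := by
        have hsplit := psum_split d (show m ≤ t by omega)
        omega
      refine all_eq_of_sum_eq (fun i hi => hone_le i (Finset.mem_Ico.1 hi).1) ?_ j
        (Finset.mem_Ico.2 ⟨hj1, hjt⟩)
      rw [Nat.card_Ico, mul_one]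
      exact hmidsum
    · -- beyond t : no zero entry before the end of support
      have hle := hone_le j hj1
      by_contra hcon
      have hdj : d j = 0 := by omega
      have hz : ∀ i, j ≤ i → d i = 0 := by
        intro i hi
        have := hd.1 j i hi
        omega
      have hsn : ∑ x ∈ Finset.range n, d x = ∑ x ∈ Finset.range j, d x := by
        rw [psum_split d (show j ≤ n by omega)]
        have hz2 : ∑ x ∈ Finset.Ico j n, d x = 0 :=
          Finset.sum_eq_zero (fun x hx => hz x (Finset.mem_Ico.1 hx).1)
        omega
      have h := hdom j
      rw [psum_P_at3 (by omega) j (by omega) (by omega)] at h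
      have hfull := hd.2.1
      omega
  have hfull2 : ∑ x ∈ Finset.range (m + s), d x = n := by
    rw [psum_split d (show m ≤ m + s by omega), hfirst]
    have hone : ∑ x ∈ Finset.Ico m (m + s), d x = s := by
      rw [Finset.sum_congr rfl (fun x hx => hones x (Finset.mem_Ico.1 hx).1
        (Finset.mem_Ico.1 hx).2), Finset.sum_const, Nat.card_Ico, smul_eq_mul]
      omega
    omega
  exact eq_P_ext hblock1 (fun i h1 h2 => by omega)
    (fun i h1 h2 => hones i (by omega) (by omega)) (zero_tail hd hfull2)
end Forced
section JIP
variable {n c m r s : ℕ}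

lemma JI_P (hp : IsPartition n (P c m r s)) (hc : 2 ≤ c) (hm : 1 ≤ m)
    (hr3 : 1 ≤ r → 3 ≤ c) (hrs4 : 1 ≤ r → 1 ≤ s → 4 ≤ c) :
    JoinIrr n (P c m r s) := by
  have hsupp := P_supp hp hc
  have hn := P_sum hp hc
  have hne : P c m r s ≠ ones n := by
    intro he
    have h0 := congrFun he 0
    rw [P_lt_m (show 0 < m by omega)] at h0
    unfold ones at h0
    rw [if_pos (by omega : 0 < n)] at h0
    omega
  by_cases hcase : r = 0 ∧ c = 2 ∧ 1 ≤ s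
  · obtain ⟨hr0, hc2, hs1⟩ := hcase
    subst hr0; subst hc2
    have e1 : P 2 m 0 s (m - 1) = 2 := P_lt_m (by omega)
    have e2 : P 2 m 0 s (m - 1 + 1) = 1 := by
      rw [show m - 1 + 1 = m by omega]
      exact P_blk3 (by omega) (by omega)
    have e3 : P 2 m 0 s (m + s) = 0 := P_big (by omega)
    have e4 : P 2 m 0 s (m + s - 1) = 1 := P_blk3 (by omega) (by omega)
    have hmv : MvOK (m - 1) (m + s) (P 2 m 0 s) := ⟨by omega, by omega, by omega, by omega⟩
    refine joinIrr_of_unique hp hne (mv_isPartition hp hmv) (mv_dom hmv) (mv_ne hmv) ?_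
    intro d hd hdom hdne t
    have hps := mv_psum hmv t
    by_cases hin : m - 1 < t ∧ t ≤ m + s
    · rw [if_pos hin] at hps
      have hneq : ∑ x ∈ Finset.range t, d x ≠ ∑ x ∈ Finset.range t, P 2 m 0 s x := by
        intro he
        apply hdne
        refine forced_two hp hm hs1 hd hdom (by omega) (by omega : t ≤ m + s) ?_
        rw [he, psum_P_at3 (by omega) t (by omega) (by omega)]
        omega
      have := hdom t
      omega
    · rw [if_neg hin] at hps
      have := hdom t
      omega
  · push_neg at hcase
    have e1 : P c m r s (m + r) + 2 ≤ P c m r s (m + r - 1) ∧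
        P c m r s (m + r) + 1 ≤ P c m r s (m + r - 1) ∧
        P c m r s (m + r - 1 + 1) + 1 ≤ P c m r s (m + r - 1) := by
      have hB1 : (1 ≤ r ∧ P c m r s (m + r - 1) = c - 1) ∨
          (r = 0 ∧ P c m r s (m + r - 1) = c) := by
        rcases Nat.eq_zero_or_pos r with h | h
        · right
          refine ⟨h, ?_⟩
          rw [show m + r - 1 = m - 1 by omega]
          exact P_lt_m (by omega)
        · exact Or.inl ⟨h, P_blk2 (by omega) (by omega)⟩
      have hB2 : (1 ≤ s ∧ P c m r s (m + r) = 1) ∨ (s = 0 ∧ P c m r s (m + r) = 0) := by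
        rcases Nat.eq_zero_or_pos s with h | h
        · exact Or.inr ⟨h, P_big (by omega)⟩
        · exact Or.inl ⟨h, P_blk3 le_rfl (by omega)⟩
      have hB3 : P c m r s (m + r - 1 + 1) = P c m r s (m + r) := by
        rw [show m + r - 1 + 1 = m + r by omega]
      rcases hB1 with ⟨h1, hv1⟩ | ⟨h1, hv1⟩ <;> rcases hB2 with ⟨h2, hv2⟩ | ⟨h2, hv2⟩ <;>
        rw [hB3, hv1, hv2] <;>
        [skip; skip; skip; skip] <;>
        first
        | (have := hr3 h1; have := hrs4 h1 h2; omega)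
        | (have := hr3 h1; omega)
        | (have := hcase h2 ; omega)
        | omega
    have hmv : MvOK (m + r - 1) (m + r) (P c m r s) :=
      ⟨by omega, e1.2.2, e1.2.1, e1.1⟩
    refine joinIrr_of_unique hp hne (mv_isPartition hp hmv) (mv_dom hmv) (mv_ne hmv) ?_
    intro d hd hdom hdne t
    have hps := mv_psum hmv t
    by_cases hin : m + r - 1 < t ∧ t ≤ m + r
    · rw [if_pos hin] at hps
      have hteq : t = m + r := by omega
      have hneq : ∑ x ∈ Finset.range t, d x ≠ ∑ x ∈ Finset.range t, P c m r s x := by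
        intro he
        apply hdne
        refine forced_main hp hc hm hd hdom ?_
        rw [← hteq, he, hteq, psum_P_at2 (by omega) (m + r) (by omega) le_rfl,
          (show m + r - m = r by omega)]
      have := hdom t
      omega
    · rw [if_neg hin] at hps
      have := hdom t
      omega
end JIP
section Sons
variable {n c m r s : ℕ} {a : ℕ → ℕ}

lemma downAt_part (hp : IsPartition n a) {j : ℕ} (hj : j ≤ n)
    (hcond : j = 0 ∨ a j + 1 ≤ a (j - 1)) : IsPartition (n + 1) (downAt j a) := by
  have hval : ∀ t, downAt j a t = a t + (if t = j then 1 else 0) := by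
    intro t
    unfold downAt
    split_ifs <;> omega
  refine ⟨?_, ?_, ?_⟩
  · apply mono_of_adj
    intro t
    rw [hval, hval]
    by_cases h1 : t + 1 = j
    · rw [if_pos h1, if_neg (by omega)]
      rcases hcond with h | h
      · omega
      · rw [(show j - 1 = t by omega)] at h
        rw [h1]
        omega
    · rw [if_neg h1]
      have := hp.1 t (t + 1) (by omega)
      by_cases h2 : t = j
      · rw [if_pos h2]; omega
      · rw [if_neg h2]; omega
  · rw [Finset.sum_congr rfl (fun x _ => hval x), Finset.sum_add_distrib,
      Finset.sum_ite_eq' (Finset.range (n + 1)) j (fun _ => (1:ℕ)),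
      if_pos (Finset.mem_range.2 (by omega)), part_psum_eq hp (by omega)]
  · intro t ht
    rw [hval, if_neg (by omega), hp.2.2 t (by omega)]

lemma downAt_P_r (hc : 2 ≤ c) (hr : 1 ≤ r) :
    downAt m (P c m r s) = P c (m + 1) (r - 1) s := by
  funext i
  unfold downAt P
  split_ifs <;> omega

lemma downAt_P_two (hm : 1 ≤ m) (hs : 1 ≤ s) :
    downAt m (P 2 m 0 s) = P 2 (m + 1) 0 (s - 1) := by
  funext i
  unfold downAt P
  split_ifs <;> omega

lemma downAt_P_zero (hc : 2 ≤ c) (hm : 1 ≤ m) :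
    downAt 0 (P c m 0 s) = P (c + 1) 1 (m - 1) s := by
  funext i
  unfold downAt P
  split_ifs <;> omega

lemma twoOnes_eq (hn : 3 ≤ n) : twoOnes n = P 2 1 0 (n - 2) := by
  funext i
  unfold twoOnes P
  split_ifs <;> omega

lemma plateau_P (hm : 2 ≤ m) (hv : P c m r s m + 1 = c) :
    SlipperyPlateau1 (P c m r s) (m - 1) := by
  refine ⟨by omega, ?_, ?_⟩
  · intro i hi
    rw [P_lt_m (by omega), P_lt_m (by omega)]
  · rw [P_lt_m (by omega), (show m - 1 + 1 = m by omega)]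
    omega

lemma step_P (hc : 3 ≤ c) (hr : 1 ≤ r) (hs4 : 1 ≤ s → 4 ≤ c) :
    NonSlipperyStep1 (P c 1 r s) := by
  have e0 : dec1 (P c 1 r s) 0 = c - 1 := by
    show (if (0:ℕ) = 0 then P c 1 r s 0 - 1 else P c 1 r s 0) = c - 1
    rw [if_pos rfl, P_lt_m (by omega)]
  refine ⟨r, hr, ?_, ?_⟩
  · intro i hi
    rw [e0]
    rcases Nat.eq_zero_or_pos i with h | h
    · rw [h, e0]
    · show (if i = 0 then P c 1 r s 0 - 1 else P c 1 r s i) = c - 1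
      rw [if_neg (by omega), P_blk2 (by omega) (by omega)]
  · have er : dec1 (P c 1 r s) r = c - 1 := by
      show (if r = 0 then P c 1 r s 0 - 1 else P c 1 r s r) = c - 1
      rw [if_neg (by omega), P_blk2 (by omega) (by omega)]
    have er1 : dec1 (P c 1 r s) (r + 1) ≤ 1 := by
      show (if r + 1 = 0 then P c 1 r s 0 - 1 else P c 1 r s (r + 1)) ≤ 1
      rw [if_neg (by omega)]
      rcases Nat.lt_or_ge (r + 1) (1 + r + s) with h | h
      · rw [P_blk3 (by omega) h]
      · rw [P_big (by omega)]; omega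
    rcases Nat.eq_zero_or_pos s with h | h
    · have : dec1 (P c 1 r s) (r + 1) = 0 := by
        show (if r + 1 = 0 then P c 1 r s 0 - 1 else P c 1 r s (r + 1)) = 0
        rw [if_neg (by omega), P_big (by omega)]
      omega
    · have := hs4 h
      omega

lemma step_P2 (hs : 1 ≤ s) : SlipperyStep1 (P 2 1 0 s) := by
  have e0 : dec1 (P 2 1 0 s) 0 = 1 := by
    show (if (0:ℕ) = 0 then P 2 1 0 s 0 - 1 else P 2 1 0 s 0) = 1
    rw [if_pos rfl, P_lt_m (by omega)]
  refine ⟨s, hs, ?_, ?_⟩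
  · intro i hi
    rw [e0]
    rcases Nat.eq_zero_or_pos i with h | h
    · rw [h, e0]
    · show (if i = 0 then P 2 1 0 s 0 - 1 else P 2 1 0 s i) = 1
      rw [if_neg (by omega), P_blk3 (by omega) (by omega)]
  · have e1 : dec1 (P 2 1 0 s) s = 1 := by
      show (if s = 0 then P 2 1 0 s 0 - 1 else P 2 1 0 s s) = 1
      rw [if_neg (by omega), P_blk3 (by omega) (by omega)]
    have e2 : dec1 (P 2 1 0 s) (s + 1) = 0 := by
      show (if s + 1 = 0 then P 2 1 0 s 0 - 1 else P 2 1 0 s (s + 1)) = 0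
      rw [if_neg (by omega), P_big (by omega)]
    omega

lemma inv_plateau (hc : 2 ≤ c) (hm : 1 ≤ m) {l : ℕ}
    (h : SlipperyPlateau1 (P c m r s) l) :
    l = m - 1 ∧ 2 ≤ m ∧ (1 ≤ r ∨ (c = 2 ∧ 1 ≤ s)) := by
  obtain ⟨hl, hall, hstep⟩ := h
  have h0 : P c m r s 0 = c := P_lt_m (by omega)
  have hlm : l < m := by
    by_contra hcon
    have hv := hall l le_rfl
    rw [h0] at hv
    unfold P at hv
    split_ifs at hv <;> omega
  have hl1 : ¬ (l + 1 < m) := by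
    intro hcon
    rw [P_lt_m hlm, P_lt_m hcon] at hstep
    omega
  have hlm1 : l = m - 1 := by omega
  refine ⟨hlm1, by omega, ?_⟩
  rw [P_lt_m hlm, (show l + 1 = m by omega)] at hstep
  unfold P at hstep
  split_ifs at hstep <;> omega

lemma inv_step_aux (hc : 2 ≤ c) (hm : 1 ≤ m) {k : ℕ} (hk : 1 ≤ k)
    (hall : ∀ i ≤ k, dec1 (P c m r s) i = dec1 (P c m r s) 0) :
    m = 1 ∧ (1 ≤ r ∨ (c = 2 ∧ 1 ≤ s)) := by
  have h1 := hall 1 hk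
  have e0 : dec1 (P c m r s) 0 = c - 1 := by
    show (if (0:ℕ) = 0 then P c m r s 0 - 1 else P c m r s 0) = c - 1
    rw [if_pos rfl, P_lt_m (by omega)]
  have e1 : dec1 (P c m r s) 1 = P c m r s 1 := by
    show (if (1:ℕ) = 0 then P c m r s 0 - 1 else P c m r s 1) = P c m r s 1
    rw [if_neg one_ne_zero]
  rw [e0, e1] at h1
  have hm1 : m = 1 := by
    by_contra hcon
    rw [P_lt_m (by omega)] at h1
    omega
  refine ⟨hm1, ?_⟩
  rw [hm1] at h1
  unfold P at h1
  split_ifs at h1 <;> omega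

lemma inv_step (hc : 2 ≤ c) (hm : 1 ≤ m)
    (h : SlipperyStep1 (P c m r s) ∨ NonSlipperyStep1 (P c m r s)) :
    m = 1 ∧ (1 ≤ r ∨ (c = 2 ∧ 1 ≤ s)) := by
  rcases h with ⟨l, hl, hall, -⟩ | ⟨k, hk, hall, -⟩
  · exact inv_step_aux hc hm hl hall
  · exact inv_step_aux hc hm hk hall

/-- classify the sons of P c m r s -/
lemma son_cases (hc : 2 ≤ c) (hm : 1 ≤ m) {b : ℕ → ℕ} (h : Son n (P c m r s) b) :
    b = downAt 0 (P c m r s) ∨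
      ((1 ≤ r ∨ (c = 2 ∧ 1 ≤ s)) ∧ m = 1 ∧ b = downAt 1 (P c m r s)) ∨
      ((1 ≤ r ∨ (c = 2 ∧ 1 ≤ s)) ∧ 2 ≤ m ∧ b = downAt m (P c m r s)) := by
  rcases h.2.2 with hb | ⟨hstep, hb⟩ | ⟨l, hpl, hb⟩
  · exact Or.inl hb
  · obtain ⟨hm1, hor⟩ := inv_step hc hm hstep
    exact Or.inr (Or.inl ⟨hor, hm1, hb⟩)
  · obtain ⟨hlm, hm2, hor⟩ := inv_plateau hc hm hpl
    refine Or.inr (Or.inr ⟨hor, hm2, ?_⟩)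
    rw [hb, (show l + 1 = m by omega)]
end Sons
section Char
variable {n : ℕ} {a : ℕ → ℕ}

lemma char_JI (hn : 1 ≤ n) (hJI : JoinIrr n a) :
    ∃ c m r s, 2 ≤ c ∧ 1 ≤ m ∧ (1 ≤ r → 3 ≤ c) ∧ (1 ≤ r → 1 ≤ s → 4 ≤ c) ∧
      a = P c m r s := by
  have hp := hJI.1
  have hmono := hp.1
  have htop : ∀ i, a i ≤ a 0 := fun i => hmono 0 i (Nat.zero_le _)
  have hc2 : 2 ≤ a 0 := by
    by_contra hcon
    push_neg at hcon
    apply hJI.2.1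
    have hall : ∀ i ∈ Finset.range n, a i = 1 := by
      refine all_eq_of_sum_eq (fun i _ => le_trans (htop i) (by omega)) ?_
      rw [Finset.card_range, mul_one]
      exact hp.2.1
    funext i
    unfold ones
    split_ifs with h
    · exact hall i (Finset.mem_range.2 h)
    · exact hp.2.2 i (by omega)
  have hex1 : ∃ i, a i < a 0 := ⟨n, by rw [hp.2.2 n le_rfl]; omega⟩
  obtain ⟨m, ham, hbm⟩ : ∃ m, a m < a 0 ∧ ∀ i < m, ¬ a i < a 0 :=
    ⟨Nat.find hex1, Nat.find_spec hex1, fun i hi => Nat.find_min hex1 hi⟩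
  have hbefore : ∀ i < m, a i = a 0 := by
    intro i hi
    have := hbm i hi
    have := htop i
    omega
  have hm1 : 1 ≤ m := by
    rcases Nat.eq_zero_or_pos m with h | h
    · rw [h] at ham; omega
    · exact h
  have ha0 : a 0 = a 0 := rfl
  rcases Nat.eq_zero_or_pos (a m) with hv0 | hv1
  · -- first block only
    refine ⟨a 0, m, 0, 0, hc2, hm1, by omega, by omega, ?_⟩
    refine eq_P_ext hbefore (fun i h1 h2 => by omega) (fun i h1 h2 => by omega) ?_
    intro i hi
    have := hmono m i (by omega)
    omega
  · have hex2 : ∃ i, a i < a m := ⟨n, by rw [hp.2.2 n le_rfl]; omega⟩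
    obtain ⟨B, haB, hbB⟩ : ∃ B, a B < a m ∧ ∀ i < B, ¬ a i < a m :=
      ⟨Nat.find hex2, Nat.find_spec hex2, fun i hi => Nat.find_min hex2 hi⟩
    have hmB : m < B := by
      rcases Nat.lt_or_ge m B with h | h
      · exact h
      · have := hmono B m h
        omega
    have hblockv : ∀ i, m ≤ i → i < B → a i = a m := by
      intro i h1 h2
      have := hmono m i h1
      have := hbB i h2
      omega
    by_cases hv1c : a m = 1
    · -- (c^m, 1^(B-m))
      refine ⟨a 0, m, 0, B - m, hc2, hm1, by omega, by omega, ?_⟩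
      refine eq_P_ext hbefore (fun i h1 h2 => by omega) ?_ ?_
      · intro i h1 h2
        have := hblockv i (by omega) (by omega)
        omega
      · intro i hi
        have := hmono B i (by omega)
        omega
    · have hv2 : 2 ≤ a m := by omega
      by_cases hvc1 : a m = a 0 - 1
      · rcases Nat.eq_zero_or_pos (a B) with hw0 | hw1
        · -- (c^m, (c-1)^(B-m))
          refine ⟨a 0, m, B - m, 0, hc2, hm1, fun _ => by omega, by omega, ?_⟩
          refine eq_P_ext hbefore ?_ (fun i h1 h2 => by omega) ?_
          · intro i h1 h2
            have := hblockv i h1 (by omega)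
            omega
          · intro i hi
            have := hmono B i (by omega)
            omega
        · by_cases hw1c : a B = 1
          · -- (c^m, (c-1)^(B-m), 1^(C-B)) : need c ≥ 4, else gadget
            have hex3 : ∃ i, a i < a B := ⟨n, by rw [hp.2.2 n le_rfl]; omega⟩
            obtain ⟨C, haC, hbC⟩ : ∃ C, a C < a B ∧ ∀ i < C, ¬ a i < a B :=
              ⟨Nat.find hex3, Nat.find_spec hex3, fun i hi => Nat.find_min hex3 hi⟩
            have hBC : B < C := by
              rcases Nat.lt_or_ge B C with h | h
              · exact h
              · have := hmono C B h
                omega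
            have hones : ∀ i, B ≤ i → i < C → a i = 1 := by
              intro i h1 h2
              have := hmono B i h1
              have := hbC i h2
              omega
            have haeq : a = P (a 0) m (B - m) (C - B) := by
              refine eq_P_ext hbefore ?_ ?_ ?_
              · intro i h1 h2
                have := hblockv i h1 (by omega)
                omega
              · intro i h1 h2
                exact hones i (by omega) (by omega)
              · intro i hi
                have := hmono C i (by omega)
                omega
            by_cases hc4 : 4 ≤ a 0
            · exact ⟨a 0, m, B - m, C - B, hc2, hm1, fun _ => by omega,
                fun _ _ => hc4, haeq⟩
            · exfalso
              have hc3 : a 0 = 3 := by omega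
              rw [haeq, hc3] at hp hJI
              exact notJI_P3 hm1 (by omega) (by omega) hp hJI
          · -- a B ≥ 2 : kill via two disjoint moves
            exfalso
            have hex4 : ∃ i, a i < a B := ⟨n, by rw [hp.2.2 n le_rfl]; omega⟩
            obtain ⟨t, hat, hbt⟩ : ∃ t, a t < a B ∧ ∀ i < t, ¬ a i < a B :=
              ⟨Nat.find hex4, Nat.find_spec hex4, fun i hi => Nat.find_min hex4 hi⟩
            have hBt : B < t := by
              rcases Nat.lt_or_ge B t with h | h
              · exact h
              · rcases Nat.lt_or_ge t B with h2 | h2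
                · have := hbB t h2; omega
                · have : t = B := by omega
                  rw [this] at hat; omega
            have eA : a (m - 1 + 1) = a m := by rw [show m - 1 + 1 = m by omega]
            have eA0 : a (m - 1) = a 0 := hbefore (m - 1) (by omega)
            have eC : a (B - 1) = a m := hblockv (B - 1) (by omega) (by omega)
            have hM1 : MvOK (m - 1) B a := ⟨by omega, by omega, by omega, by omega⟩
            have eD : a (t - 1 + 1) = a t := by rw [show t - 1 + 1 = t by omega]
            have eE : a (t - 1) = a B := by
              have h1 := hbt (t - 1) (by omega)
              have h2 := hmono B (t - 1) (by omega)
              omega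
            rcases Nat.eq_zero_or_pos (a t) with hu0 | hu1
            · exact notJI_disj hp hM1
                (⟨by omega, by omega, by omega, by omega⟩ : MvOK (t - 1) t a)
                (by omega) hJI
            · have hex5 : ∃ i, a i < a t := ⟨n, by rw [hp.2.2 n le_rfl]; omega⟩
              obtain ⟨t2, hat2, hbt2⟩ : ∃ t2, a t2 < a t ∧ ∀ i < t2, ¬ a i < a t :=
                ⟨Nat.find hex5, Nat.find_spec hex5, fun i hi => Nat.find_min hex5 hi⟩
              have htt2 : t < t2 := by
                rcases Nat.lt_or_ge t t2 with h | h
                · exact h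
                · rcases Nat.lt_or_ge t2 t with h2 | h2
                  · have := hbt t2 h2; omega
                  · have : t2 = t := by omega
                    rw [this] at hat2; omega
              have eF : a (t2 - 1) ≥ a t := by
                have := hbt2 (t2 - 1) (by omega)
                omega
              exact notJI_disj hp hM1
                (⟨by omega, by omega, by omega, by omega⟩ : MvOK (t - 1) t2 a)
                (by omega) hJI
      · -- 2 ≤ a m ≤ a 0 - 2
        exfalso
        have eA : a (m - 1 + 1) = a m := by rw [show m - 1 + 1 = m by omega]
        have eA0 : a (m - 1) = a 0 := hbefore (m - 1) (by omega)
        have hM1 : MvOK (m - 1) m a := ⟨by omega, by omega, by omega, by omega⟩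
        have eC : a (B - 1) = a m := hblockv (B - 1) (by omega) (by omega)
        have eD : a (B - 1 + 1) = a B := by rw [show B - 1 + 1 = B by omega]
        rcases Nat.eq_zero_or_pos (a B) with hw0 | hw1
        · exact notJI_disj hp hM1
            (⟨by omega, by omega, by omega, by omega⟩ : MvOK (B - 1) B a)
            (by omega) hJI
        · have hex6 : ∃ i, a i < a B := ⟨n, by rw [hp.2.2 n le_rfl]; omega⟩
          obtain ⟨t, hat, hbt⟩ : ∃ t, a t < a B ∧ ∀ i < t, ¬ a i < a B :=
            ⟨Nat.find hex6, Nat.find_spec hex6, fun i hi => Nat.find_min hex6 hi⟩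
          have hBt : B < t := by
            rcases Nat.lt_or_ge B t with h | h
            · exact h
            · rcases Nat.lt_or_ge t B with h2 | h2
              · have := hbB t h2; omega
              · have : t = B := by omega
                rw [this] at hat; omega
          have eE : a (t - 1) ≥ a B := by
            have := hbt (t - 1) (by omega)
            omega
          exact notJI_disj hp hM1
            (⟨by omega, by omega, by omega, by omega⟩ : MvOK (B - 1) t a)
            (by omega) hJI
end Char

/-- For n ≥ 3, every join-irreducible partition of n other than (2,1,…,1) has
exactly one join-irreducible son, while (2,1,…,1) has exactly two. -/
theorem stmt10 (n : ℕ) (hn : 3 ≤ n) :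
    (∀ a, JoinIrr n a → a ≠ twoOnes n →
      ∃! b, Son n a b ∧ JoinIrr (n + 1) b) ∧
    (∃ b c, b ≠ c ∧ Son n (twoOnes n) b ∧ JoinIrr (n + 1) b ∧
      Son n (twoOnes n) c ∧ JoinIrr (n + 1) c ∧
      ∀ d, Son n (twoOnes n) d → JoinIrr (n + 1) d → d = b ∨ d = c) := by
  constructor
  · intro a hJI hne2
    obtain ⟨c, m, r, s, hc, hm, hr3, hrs4, rfl⟩ := char_JI (by omega) hJI
    have hp := hJI.1
    have hsupp := P_supp hp hc
    have hnsum := P_sum hp hc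
    by_cases hr : 1 ≤ r
    · -- right son downAt m is the unique JI son
      have hc3 := hr3 hr
      have heq : downAt m (P c m r s) = P c (m + 1) (r - 1) s := downAt_P_r hc hr
      have em : P c m r s m = c - 1 := P_blk2 le_rfl (by omega)
      have em1 : P c m r s (m - 1) = c := P_lt_m (by omega)
      have hbpart : IsPartition (n + 1) (downAt m (P c m r s)) :=
        downAt_part hp (by omega) (Or.inr (by omega))
      have hbJI : JoinIrr (n + 1) (downAt m (P c m r s)) := by
        rw [heq]
        exact JI_P (heq ▸ hbpart) hc (by omega) (fun _ => hc3)
          (fun _ h2 => hrs4 hr h2)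
      have hson : Son n (P c m r s) (downAt m (P c m r s)) := by
        refine ⟨hp, hbpart, ?_⟩
        rcases Nat.lt_or_ge m 2 with h | h
        · have hm1 : m = 1 := by omega
          refine Or.inr (Or.inl ⟨Or.inr ?_, by rw [hm1]⟩)
          rw [hm1]
          exact step_P hc3 hr (fun hs => hrs4 hr hs)
        · refine Or.inr (Or.inr ⟨m - 1, plateau_P h (by omega), ?_⟩)
          rw [show m - 1 + 1 = m by omega]
      refine ⟨downAt m (P c m r s), ⟨hson, hbJI⟩, ?_⟩
      rintro b ⟨hbson, hbJI'⟩
      rcases son_cases hc hm hbson with hb | ⟨-, hm1, hb⟩ | ⟨-, -, hb⟩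
      · exfalso
        subst hb
        exact notJI_L hc3 hm hr hbson.2.1 hbJI'
      · rw [hb, hm1]
      · exact hb
    · have hr0 : r = 0 := by omega
      subst hr0
      by_cases hcs : c = 2 ∧ 1 ≤ s
      · -- (2^m, 1^s) with m ≥ 2
        obtain ⟨hc2, hs1⟩ := hcs
        subst hc2
        have hm2 : 2 ≤ m := by
          by_contra hcon
          have hm1 : m = 1 := by omega
          apply hne2
          rw [twoOnes_eq hn, hm1]
          rw [hm1] at hnsum
          rw [show s = n - 2 by omega]
        have em : P 2 m 0 s m = 1 := P_blk3 (by omega) (by omega)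
        have em1 : P 2 m 0 s (m - 1) = 2 := P_lt_m (by omega)
        have heq : downAt m (P 2 m 0 s) = P 2 (m + 1) 0 (s - 1) := downAt_P_two hm hs1
        have hbpart : IsPartition (n + 1) (downAt m (P 2 m 0 s)) :=
          downAt_part hp (by omega) (Or.inr (by omega))
        have hbJI : JoinIrr (n + 1) (downAt m (P 2 m 0 s)) := by
          rw [heq]
          exact JI_P (heq ▸ hbpart) (by omega) (by omega) (by omega) (by omega)
        have hson : Son n (P 2 m 0 s) (downAt m (P 2 m 0 s)) := by
          refine ⟨hp, hbpart, Or.inr (Or.inr ⟨m - 1, plateau_P hm2 (by omega), ?_⟩)⟩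
          rw [show m - 1 + 1 = m by omega]
        refine ⟨downAt m (P 2 m 0 s), ⟨hson, hbJI⟩, ?_⟩
        rintro b ⟨hbson, hbJI'⟩
        rcases son_cases (by omega) hm hbson with hb | ⟨-, hm1, hb⟩ | ⟨-, -, hb⟩
        · exfalso
          subst hb
          have hpart := hbson.2.1
          rw [downAt_P_zero (by omega) hm] at hpart hbJI'
          exact notJI_P3 (by omega) (by omega) (by omega) hpart hbJI'
        · omega
        · exact hb
      · -- left son downAt 0 is the unique JI son
        have heq : downAt 0 (P c m 0 s) = P (c + 1) 1 (m - 1) s := downAt_P_zero hc hm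
        have hbpart : IsPartition (n + 1) (downAt 0 (P c m 0 s)) :=
          downAt_part hp (by omega) (Or.inl rfl)
        have hbJI : JoinIrr (n + 1) (downAt 0 (P c m 0 s)) := by
          rw [heq]
          refine JI_P (heq ▸ hbpart) (by omega) le_rfl (fun _ => by omega) ?_
          intro h1 h2
          have : ¬ (c = 2 ∧ 1 ≤ s) := hcs
          omega
        have hson : Son n (P c m 0 s) (downAt 0 (P c m 0 s)) := ⟨hp, hbpart, Or.inl rfl⟩
        refine ⟨downAt 0 (P c m 0 s), ⟨hson, hbJI⟩, ?_⟩
        rintro b ⟨hbson, hbJI'⟩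
        rcases son_cases hc hm hbson with hb | ⟨hor, -, -⟩ | ⟨hor, -, -⟩
        · exact hb
        · rcases hor with h | h
          · omega
          · exact absurd h hcs
        · rcases hor with h | h
          · omega
          · exact absurd h hcs
  · -- twoOnes has exactly the two JI sons
    rw [twoOnes_eq hn]
    have hp2 : IsPartition n (P 2 1 0 (n - 2)) := by
      refine ⟨P_mono (by omega), ?_, fun i hi => P_big (by omega)⟩
      rw [psum_P (by omega), min_eq_right (show (1:ℕ) ≤ n by omega),
        min_eq_right (show 1 + 0 + (n - 2) ≤ n by omega)]
      omega
    have e0 : P 2 1 0 (n - 2) 0 = 2 := P_lt_m (by omega)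
    have e1 : P 2 1 0 (n - 2) 1 = 1 := P_blk3 (by omega) (by omega)
    have e0' : P 2 1 0 (n - 2) (1 - 1) = 2 := P_lt_m (by omega)
    have heqb : downAt 0 (P 2 1 0 (n - 2)) = P (2 + 1) 1 (1 - 1) (n - 2) :=
      downAt_P_zero (by omega) (by omega)
    have heqc : downAt 1 (P 2 1 0 (n - 2)) = P 2 (1 + 1) 0 (n - 2 - 1) :=
      downAt_P_two le_rfl (by omega)
    have hbpart : IsPartition (n + 1) (downAt 0 (P 2 1 0 (n - 2))) :=
      downAt_part hp2 (by omega) (Or.inl rfl)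
    have hcpart : IsPartition (n + 1) (downAt 1 (P 2 1 0 (n - 2))) :=
      downAt_part hp2 (by omega) (Or.inr (by omega))
    refine ⟨downAt 0 (P 2 1 0 (n - 2)), downAt 1 (P 2 1 0 (n - 2)), ?_, ?_, ?_, ?_, ?_, ?_⟩
    · intro he
      have h0 := congrFun he 0
      rw [show downAt 0 (P 2 1 0 (n - 2)) 0 =
        (if (0:ℕ) = 0 then P 2 1 0 (n - 2) 0 + 1 else P 2 1 0 (n - 2) 0) from rfl,
        if_pos rfl, show downAt 1 (P 2 1 0 (n - 2)) 0 =
        (if (0:ℕ) = 1 then P 2 1 0 (n - 2) 0 + 1 else P 2 1 0 (n - 2) 0) from rfl,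
        if_neg (by omega)] at h0
      omega
    · exact ⟨hp2, hbpart, Or.inl rfl⟩
    · rw [heqb]
      exact JI_P (heqb ▸ hbpart) (by omega) le_rfl (by omega) (by omega)
    · exact ⟨hp2, hcpart, Or.inr (Or.inl ⟨Or.inl (step_P2 (by omega)), rfl⟩)⟩
    · rw [heqc]
      exact JI_P (heqc ▸ hcpart) (by omega) (by omega) (by omega) (by omega)
    · intro d hson hdJI
      rcases son_cases (by omega) le_rfl hson with hb | ⟨-, -, hb⟩ | ⟨-, h2, -⟩
      · exact Or.inl hb
      · exact Or.inr hb
      · omega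
end
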